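/- arXiv:2503.12219 — 8 statements merged into one kernel-verified Lean document; each statement's English description precedes it below -/
import Mathlib

section
/- Let f be a homogeneous polynomial of degree D ≥ 2 in two real variables and let ℓ(x,y) = ax + by be a nonzero linear form. Then the Hessian of the product ℓ·f satisfies Hess(ℓf)(x,y) = ((D+1)/(D-1))·ℓ(x,y)²·Hess(f)(x,y) − (a·f_y(x,y) − b·f_x(x,y))² for all (x,y). -/
open MvPolynomial Real

/-- The Hessian polynomial `f_xx * f_yy - f_xy ^ 2` of a bivariate real polynomial. -/
noncomputable def Hess (f : MvPolynomial (Fin 2) ℝ) : MvPolynomial (Fin 2) ℝ :=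
  pderiv 0 (pderiv 0 f) * pderiv 1 (pderiv 1 f) - (pderiv 1 (pderiv 0 f)) ^ 2

/-- A bivariate polynomial is hyperbolic if its Hessian is negative off the origin. -/
def Hyperbolic (f : MvPolynomial (Fin 2) ℝ) : Prop :=
  ∀ x y : ℝ, ¬(x = 0 ∧ y = 0) → eval ![x, y] (Hess f) < 0

lemma X_mul_pderiv_monomial (i : Fin 2) (d : Fin 2 →₀ ℕ) (c : ℝ) :
    X i * pderiv i (monomial d c) = monomial d (c * d i) := by
  rw [pderiv_monomial]
  rcases Nat.eq_zero_or_pos (d i) with h | h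
  · simp [h]
  · rw [X, monomial_mul, one_mul, add_tsub_cancel_of_le (Finsupp.single_le_iff.mpr h)]

lemma euler_formula {n : ℕ} (f : MvPolynomial (Fin 2) ℝ) (hf : f.IsHomogeneous n) :
    X 0 * pderiv 0 f + X 1 * pderiv 1 f = C (n : ℝ) * f := by
  rw [f.as_sum]
  simp only [map_sum, Finset.mul_sum]
  rw [← Finset.sum_add_distrib]
  refine Finset.sum_congr rfl fun d hd => ?_
  have h2 : d 0 + d 1 = n := by
    have h := hf (MvPolynomial.mem_support_iff.mp hd)
    erw [← Finsupp.degree_eq_weight_one] at h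
    rw [← h, Finsupp.degree_apply,
      Finset.sum_subset (Finset.subset_univ _) (fun i _ hi => Finsupp.notMem_support_iff.mp hi),
      Fin.sum_univ_two]
  rw [_root_.X_mul_pderiv_monomial, _root_.X_mul_pderiv_monomial, C_mul_monomial, ← map_add]
  congr 1
  rw [← h2]
  push_cast
  ring

lemma pderiv_pderiv_comm (i j : Fin 2) (f : MvPolynomial (Fin 2) ℝ) :
    pderiv i (pderiv j f) = pderiv j (pderiv i f) := by
  rcases eq_or_ne i j with rfl | hij
  · rfl
  · rw [f.as_sum, map_sum, map_sum, map_sum, map_sum]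
    refine Finset.sum_congr rfl fun s _ => ?_
    rw [pderiv_monomial, pderiv_monomial, pderiv_monomial, pderiv_monomial,
      Finsupp.tsub_apply, Finsupp.tsub_apply, Finsupp.single_eq_of_ne hij,
      Finsupp.single_eq_of_ne hij.symm, tsub_zero, tsub_zero, tsub_right_comm,
      mul_right_comm]

theorem hess_linear_mul (D : ℕ) (hD : 2 ≤ D) (f : MvPolynomial (Fin 2) ℝ)
    (hf : f.IsHomogeneous D) (a b : ℝ) (hab : ¬(a = 0 ∧ b = 0)) :
    Hess ((C a * X 0 + C b * X 1) * f) =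
      C ((D + 1 : ℝ) / (D - 1)) * (C a * X 0 + C b * X 1) ^ 2 * Hess f
        - (C a * pderiv 1 f - C b * pderiv 0 f) ^ 2 := by
  have hd1 : ((D : ℝ) - 1) ≠ 0 := by
    have : (2 : ℝ) ≤ (D : ℕ) := by exact_mod_cast hD
    linarith
  have hne01 : (0 : Fin 2) ≠ 1 := by decide
  have hne10 : (1 : Fin 2) ≠ 0 := by decide
  have E := euler_formula f hf
  have e1 : X 0 * pderiv 0 (pderiv 0 f) + X 1 * pderiv 1 (pderiv 0 f) =
      (C (D : ℝ) - 1) * pderiv 0 f := by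
    have h := congrArg (pderiv 0) E
    simp only [map_add, pderiv_mul, pderiv_X_self, pderiv_X_of_ne hne10, pderiv_C_mul, pderiv_C,
      one_mul, zero_mul, add_zero, zero_add] at h
    rw [pderiv_pderiv_comm 0 1 f] at h
    linear_combination h
  have e2 : X 0 * pderiv 1 (pderiv 0 f) + X 1 * pderiv 1 (pderiv 1 f) =
      (C (D : ℝ) - 1) * pderiv 1 f := by
    have h := congrArg (pderiv 1) E
    simp only [map_add, pderiv_mul, pderiv_X_self, pderiv_X_of_ne hne01, pderiv_C_mul, pderiv_C,
      one_mul, zero_mul, add_zero, zero_add] at h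
    linear_combination h
  have hCr : (C (D : ℝ) - 1) * C (((D : ℝ) + 1) / ((D : ℝ) - 1)) =
      (C (D : ℝ) + 1 : MvPolynomial (Fin 2) ℝ) := by
    rw [← C_1, ← map_sub, ← map_mul, ← map_add]
    congr 1
    field_simp
  have hCne : (C ((D : ℝ) - 1) : MvPolynomial (Fin 2) ℝ) ≠ 0 := by
    rwa [Ne, MvPolynomial.C_eq_zero]
  apply mul_left_cancel₀ hCne
  simp only [Hess, map_add, pderiv_mul, pderiv_C_mul, pderiv_X_self, pderiv_X_of_ne hne01,
    pderiv_X_of_ne hne10, pderiv_C, mul_zero, zero_mul, add_zero, zero_add, mul_one, one_mul,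
    map_sub, map_one]
  linear_combination
    (-((C a * X 0 + C b * X 1) ^ 2 *
        (pderiv 0 (pderiv 0 f) * pderiv 1 (pderiv 1 f) - (pderiv 1 (pderiv 0 f)) ^ 2))) * hCr
    + (2 * (C a * X 0 + C b * X 1) *
        (C b * pderiv 1 (pderiv 0 f) - C a * pderiv 1 (pderiv 1 f))) * e1
    + (2 * (C a * X 0 + C b * X 1) *
        (C a * pderiv 1 (pderiv 0 f) - C b * pderiv 0 (pderiv 0 f))) * e2
end

section
/- Let f be a homogeneous polynomial of degree D ≥ 2 in two real variables that is hyperbolic (i.e., Hess(f) < 0 on ℝ² \ {0}), and let ℓ(x,y) = ax + by be a nonzero linear form. Then the product ℓ·f is hyperbolic of degree D+1 if and only if ℓ does not divide the polynomial a·f_y − b·f_x. -/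
open MvPolynomial Real

namespace HypAux

noncomputable section

abbrev R2 := MvPolynomial (Fin 2) ℝ

lemma degree_two (d : Fin 2 →₀ ℕ) : d.degree = d 0 + d 1 := by
  rw [Finsupp.degree_apply, Finset.sum_subset (Finset.subset_univ _) (by
    intro x _ hx
    simpa using Finsupp.notMem_support_iff.mp hx)]
  exact Fin.sum_univ_two d

lemma homog_degree {f : R2} {n : ℕ} (hf : f.IsHomogeneous n) {d : Fin 2 →₀ ℕ}
    (hd : coeff d f ≠ 0) : d 0 + d 1 = n := by
  rw [← degree_two]
  exact (Finsupp.degree_eq_weight_one (R := ℕ) ▸ hf hd : _)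

lemma X_mul_pderiv_monomial (i : Fin 2) (m : Fin 2 →₀ ℕ) (c : ℝ) :
    X i * pderiv i (monomial m c) = monomial m (c * (m i : ℝ)) := by
  rw [pderiv_monomial]
  rcases Nat.eq_zero_or_pos (m i) with h | h
  · simp [h]
  · rw [← pow_one (X i : R2), X_pow_eq_monomial, monomial_mul, one_mul,
      add_tsub_cancel_of_le (Finsupp.single_le_iff.mpr h)]

lemma euler {f : R2} {n : ℕ} (hf : f.IsHomogeneous n) :
    X 0 * pderiv 0 f + X 1 * pderiv 1 f = C (n : ℝ) * f := by
  conv_lhs => rw [f.as_sum]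
  conv_rhs => rw [f.as_sum]
  rw [map_sum (pderiv 0), map_sum (pderiv 1), Finset.mul_sum, Finset.mul_sum, Finset.mul_sum,
    ← Finset.sum_add_distrib]
  refine Finset.sum_congr rfl fun m hm => ?_
  rw [X_mul_pderiv_monomial, X_mul_pderiv_monomial, C_mul_monomial, ← (monomial m).map_add]
  congr 1
  have := homog_degree hf (mem_support_iff.mp hm)
  push_cast [← this]
  ring

lemma isHomogeneous_pderiv {f : R2} {n : ℕ} (hf : f.IsHomogeneous n) (i : Fin 2) :
    (pderiv i f).IsHomogeneous (n - 1) := by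
  conv_lhs => rw [f.as_sum]
  rw [map_sum (pderiv i)]
  apply IsHomogeneous.sum
  intro m hm
  rw [pderiv_monomial]
  rcases Nat.eq_zero_or_pos (m i) with h | h
  · simp only [h, Nat.cast_zero, mul_zero, map_zero]
    exact isHomogeneous_zero _ _ _
  · apply isHomogeneous_monomial
    rw [degree_two]
    have hd := homog_degree hf (mem_support_iff.mp hm)
    have hi2 : i = 0 ∨ i = 1 := by omega
    rcases hi2 with rfl | rfl <;>
      simp only [Finsupp.tsub_apply, Finsupp.single_eq_same,
        Finsupp.single_eq_of_ne (by decide : (0:Fin 2) ≠ 1),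
        Finsupp.single_eq_of_ne (by decide : (1:Fin 2) ≠ 0), Nat.sub_zero] <;> omega

lemma pderiv_comm (i j : Fin 2) (f : R2) :
    pderiv i (pderiv j f) = pderiv j (pderiv i f) := by
  induction f using MvPolynomial.induction_on with
  | C => simp
  | add p q hp hq => simp [hp, hq]
  | mul_X p k hk =>
      have h2 : ∀ u v : Fin 2, pderiv u (pderiv v (X k : R2)) = 0 := by
        intro u v
        fin_cases v <;> fin_cases k <;> simp
      simp only [pderiv_mul, map_add, pderiv_mul, hk, h2]
      ring

lemma euler' {f : R2} {D : ℕ} (hD : 2 ≤ D) (hf : f.IsHomogeneous D) (i : Fin 2) :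
    X 0 * pderiv 0 (pderiv i f) + X 1 * pderiv 1 (pderiv i f)
      = (C (D : ℝ) - 1) * pderiv i f := by
  rw [euler (isHomogeneous_pderiv hf i)]
  congr 1
  rw [Nat.cast_sub (by omega)]
  simp [map_sub, map_natCast]

set_option maxHeartbeats 2000000 in
lemma key {D : ℕ} (hD : 2 ≤ D) {f : R2} (hf : f.IsHomogeneous D) (a b : ℝ) :
    (C (D : ℝ) - 1) * Hess ((C a * X 0 + C b * X 1) * f) =
      (C (D : ℝ) + 1) * (C a * X 0 + C b * X 1) ^ 2 * Hess f
        - (C (D : ℝ) - 1) * (C a * pderiv 1 f - C b * pderiv 0 f) ^ 2 := by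
  have e1 := euler' hD hf 0
  have e2 := euler' hD hf 1
  rw [pderiv_comm 0 1 f] at e2
  unfold Hess
  simp only [pderiv_mul, map_add, pderiv_C, pderiv_C_mul, pderiv_X_self, zero_mul, mul_zero, add_zero, zero_add,
    pderiv_X_of_ne (by decide : (1:Fin 2) ≠ 0), pderiv_X_of_ne (by decide : (0:Fin 2) ≠ 1),
    mul_zero, mul_one, add_zero, zero_add]
  linear_combination (-(2:R2) * (C a * X 0 + C b * X 1) *
      (C a * pderiv 1 (pderiv 1 f) - C b * pderiv 1 (pderiv 0 f))) * e1 +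
    (-(2:R2) * (C a * X 0 + C b * X 1) *
      (C b * pderiv 0 (pderiv 0 f) - C a * pderiv 1 (pderiv 0 f))) * e2

def psi : R2 →ₐ[ℝ] R2 := aeval ![0, X 1]

lemma psi_X (k : Fin 2) : psi (X k) = ![0, (X 1 : R2)] k := aeval_X _ k

lemma psi_X0_dvd_sub (g : R2) : X 0 ∣ g - psi g := by
  induction g using MvPolynomial.induction_on with
  | C c => simp [psi]
  | add p q hp hq =>
      have : p + q - psi (p + q) = (p - psi p) + (q - psi q) := by
        rw [map_add]; ring
      rw [this]; exact dvd_add hp hq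
  | mul_X p k hp =>
      have hk : k = 0 ∨ k = 1 := by omega
      rcases hk with rfl | rfl
      · rw [map_mul, psi_X]
        simp
      · rw [map_mul, psi_X]
        have : p * X 1 - psi p * ![0, (X 1 : R2)] 1 = (p - psi p) * X 1 := by
          simp only [Matrix.cons_val_one, Matrix.head_cons, Matrix.cons_val_zero]; ring
        rw [this]
        exact Dvd.dvd.mul_right hp (X 1)

lemma X0_dvd_iff (g : R2) : X 0 ∣ g ↔ psi g = 0 := by
  constructor
  · rintro ⟨q, rfl⟩
    rw [map_mul, psi_X]
    simp
  · intro h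
    have := psi_X0_dvd_sub g
    rwa [h, sub_zero] at this

def lin (a b : ℝ) : R2 := C a * X 0 + C b * X 1

def av (a b : ℝ) : Fin 2 → R2 :=
  ![C (a / (a ^ 2 + b ^ 2)) * X 0 - C (b / (a ^ 2 + b ^ 2)) * X 1,
    C (b / (a ^ 2 + b ^ 2)) * X 0 + C (a / (a ^ 2 + b ^ 2)) * X 1]

def wv (a b : ℝ) : Fin 2 → R2 := ![C a * X 0 + C b * X 1, -(C b * X 0) + C a * X 1]

lemma hrel1 {a b : ℝ} (hs : a ^ 2 + b ^ 2 ≠ 0) :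
    C (a / (a ^ 2 + b ^ 2)) * C a + C (b / (a ^ 2 + b ^ 2)) * C b = (1 : R2) := by
  rw [← map_mul, ← map_mul, ← map_add, ← map_one C]
  congr 1
  field_simp

lemma hrel2 (a b : ℝ) :
    C (a / (a ^ 2 + b ^ 2)) * C b = C (b / (a ^ 2 + b ^ 2)) * (C a : R2) := by
  rw [← map_mul, ← map_mul]
  congr 1
  ring

lemma beta_alpha {a b : ℝ} (hs : a ^ 2 + b ^ 2 ≠ 0) (g : R2) :
    aeval (wv a b) (aeval (av a b) g) = g := by
  rw [comp_aeval_apply]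
  have hX : (fun i => aeval (wv a b) (av a b i)) = X := by
    funext i
    have hi : i = 0 ∨ i = 1 := by omega
    rcases hi with rfl | rfl <;>
      simp only [av, wv, Matrix.cons_val_zero, Matrix.cons_val_one, Matrix.head_cons,
        map_add, map_sub, map_mul, map_neg, aeval_C, aeval_X, algebraMap_eq]
    · linear_combination (X 0 : R2) * hrel1 hs + (X 1 : R2) * hrel2 a b
    · linear_combination (X 1 : R2) * hrel1 hs - (X 0 : R2) * hrel2 a b
  rw [hX, aeval_X_left_apply]

lemma alpha_lin {a b : ℝ} (hs : a ^ 2 + b ^ 2 ≠ 0) :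
    aeval (av a b) (lin a b) = X 0 := by
  simp only [lin, av, map_add, map_mul, aeval_C, aeval_X, algebraMap_eq,
    Matrix.cons_val_zero, Matrix.cons_val_one, Matrix.head_cons]
  linear_combination (X 0 : R2) * hrel1 hs + (X 1 : R2) * hrel2 a b

lemma lin_dvd_iff {a b : ℝ} (hs : a ^ 2 + b ^ 2 ≠ 0) (h : R2) :
    lin a b ∣ h ↔ X 0 ∣ aeval (av a b) h := by
  constructor
  · rintro ⟨q, rfl⟩
    rw [map_mul, alpha_lin hs]
    exact dvd_mul_right _ _
  · intro hd
    have h2 := map_dvd (aeval (wv a b) : R2 →ₐ[ℝ] R2) hd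
    rw [beta_alpha hs] at h2
    have : aeval (wv a b) ((X 0 : R2)) = lin a b := by
      simp [wv, lin]
    rwa [this] at h2

lemma aeval_CX1 {h : R2} {n : ℕ} (hh : h.IsHomogeneous n) (c d : ℝ) :
    aeval (![C c * X 1, C d * X 1] : Fin 2 → R2) h = C (eval ![c, d] h) * X 1 ^ n := by
  conv_lhs => rw [h.as_sum]
  conv_rhs => rw [h.as_sum]
  rw [map_sum, map_sum, map_sum, Finset.sum_mul]
  refine Finset.sum_congr rfl fun m hm => ?_
  rw [aeval_monomial, eval_monomial,
    Finsupp.prod_fintype _ _ (fun i => pow_zero _),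
    Finsupp.prod_fintype _ _ (fun i => pow_zero _),
    Fin.prod_univ_two, Fin.prod_univ_two, ← homog_degree hh (mem_support_iff.mp hm)]
  simp only [Matrix.cons_val_zero, Matrix.cons_val_one, Matrix.head_cons, algebraMap_eq,
    map_mul, map_pow, mul_pow, pow_add]
  ring

lemma eval_scale {h : R2} {n : ℕ} (hh : h.IsHomogeneous n) (t c d : ℝ) :
    eval ![t * c, t * d] h = t ^ n * eval ![c, d] h := by
  conv_lhs => rw [h.as_sum]
  conv_rhs => rw [h.as_sum]
  rw [map_sum, map_sum, Finset.mul_sum]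
  refine Finset.sum_congr rfl fun m hm => ?_
  rw [eval_monomial, eval_monomial,
    Finsupp.prod_fintype _ _ (fun i => pow_zero _),
    Finsupp.prod_fintype _ _ (fun i => pow_zero _),
    Fin.prod_univ_two, Fin.prod_univ_two, ← homog_degree hh (mem_support_iff.mp hm)]
  simp only [Matrix.cons_val_zero, Matrix.cons_val_one, Matrix.head_cons, mul_pow, pow_add]
  ring

lemma lin_dvd_iff_eval {a b : ℝ} {h : R2} {n : ℕ} (hh : h.IsHomogeneous n)
    (hab : ¬(a = 0 ∧ b = 0)) : lin a b ∣ h ↔ eval ![-b, a] h = 0 := by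
  have hs : a ^ 2 + b ^ 2 ≠ 0 := by
    intro h0
    exact hab ⟨by nlinarith [sq_nonneg a, sq_nonneg b], by nlinarith [sq_nonneg a, sq_nonneg b]⟩
  have huv : psi (aeval (av a b) h) =
      aeval (![C (-(b / (a ^ 2 + b ^ 2))) * X 1,
        C (a / (a ^ 2 + b ^ 2)) * X 1] : Fin 2 → R2) h := by
    rw [show psi = (aeval ![0, X 1] : R2 →ₐ[ℝ] R2) from rfl, comp_aeval_apply]
    have hfun : (fun i => (aeval ![0, X 1] : R2 →ₐ[ℝ] R2) (av a b i)) =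
        (![C (-(b / (a ^ 2 + b ^ 2))) * X 1, C (a / (a ^ 2 + b ^ 2)) * X 1] : Fin 2 → R2) := by
      funext i
      have hi : i = 0 ∨ i = 1 := by omega
      rcases hi with rfl | rfl <;> simp [av, algebraMap_eq, map_neg]
    rw [hfun]
  have hK := aeval_CX1 hh (-(b / (a ^ 2 + b ^ 2))) (a / (a ^ 2 + b ^ 2))
  rw [lin_dvd_iff hs, X0_dvd_iff, huv, hK]
  have hsc : eval ![-(b / (a ^ 2 + b ^ 2)), a / (a ^ 2 + b ^ 2)] h =
      ((a ^ 2 + b ^ 2)⁻¹) ^ n * eval ![-b, a] h := by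
    have := eval_scale hh ((a ^ 2 + b ^ 2)⁻¹) (-b) a
    rw [show (a ^ 2 + b ^ 2)⁻¹ * -b = -(b / (a ^ 2 + b ^ 2)) by ring,
      show (a ^ 2 + b ^ 2)⁻¹ * a = a / (a ^ 2 + b ^ 2) by ring] at this
    exact this
  rw [hsc]
  constructor
  · intro h0
    rcases mul_eq_zero.mp h0 with h1 | h1
    · have := (map_eq_zero_iff C (C_injective (Fin 2) ℝ)).mp h1
      rcases mul_eq_zero.mp this with h2 | h2
      · exact absurd h2 (pow_ne_zero n (inv_ne_zero hs))
      · exact h2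
    · exact absurd h1 (pow_ne_zero n (X_ne_zero 1))
  · intro h0
    rw [h0, mul_zero, map_zero, zero_mul]

end

end HypAux

theorem linear_mul_hyperbolic_iff (D : ℕ) (hD : 2 ≤ D) (f : MvPolynomial (Fin 2) ℝ)
    (hf : f.IsHomogeneous D) (hyp : Hyperbolic f) (a b : ℝ) (hab : ¬(a = 0 ∧ b = 0)) :
    Hyperbolic ((C a * X 0 + C b * X 1) * f) ↔
      ¬ (C a * X 0 + C b * X 1) ∣ (C a * pderiv 1 f - C b * pderiv 0 f) := by
  have hD1 : (0:ℝ) < (D:ℝ) - 1 := by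
    have : (2:ℝ) ≤ (D:ℝ) := by exact_mod_cast hD
    linarith
  have hD2 : (0:ℝ) < (D:ℝ) + 1 := by positivity
  have hkey := HypAux.key hD hf a b
  have keval : ∀ x y : ℝ, ((D:ℝ) - 1) * eval ![x, y] (Hess ((C a * X 0 + C b * X 1) * f)) =
      ((D:ℝ) + 1) * (a * x + b * y) ^ 2 * eval ![x, y] (Hess f)
        - ((D:ℝ) - 1) *
            (a * eval ![x, y] (pderiv 1 f) - b * eval ![x, y] (pderiv 0 f)) ^ 2 := by
    intro x y
    have h := congrArg (eval ![x, y]) hkey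
    simpa [map_mul, map_add, map_sub, map_pow, eval_C, eval_X, Matrix.cons_val_zero,
      Matrix.cons_val_one, Matrix.head_cons] using h
  have hhom : (C a * pderiv 1 f - C b * pderiv 0 f).IsHomogeneous (D - 1) :=
    ((HypAux.isHomogeneous_pderiv hf 1).C_mul a).sub ((HypAux.isHomogeneous_pderiv hf 0).C_mul b)
  have hdvd_iff := HypAux.lin_dvd_iff_eval hhom hab
  have hevh : ∀ x y : ℝ, eval ![x, y] (C a * pderiv 1 f - C b * pderiv 0 f)
      = a * eval ![x, y] (pderiv 1 f) - b * eval ![x, y] (pderiv 0 f) := by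
    intro x y; simp
  constructor
  · intro hyp' hdvd
    have h0 : eval ![-b, a] (C a * pderiv 1 f - C b * pderiv 0 f) = 0 :=
      hdvd_iff.mp hdvd
    rw [hevh] at h0
    have hne : ¬((-b : ℝ) = 0 ∧ a = 0) := by
      rintro ⟨h1, h2⟩
      exact hab ⟨h2, by linarith [neg_eq_zero.mp h1]⟩
    have hlt := hyp' (-b) a hne
    have h1 := keval (-b) a
    rw [h0] at h1
    have hz : a * (-b) + b * a = 0 := by ring
    rw [hz] at h1
    nlinarith [h1, hlt, hD1]
  · intro hnd x y hxy
    have Hf := hyp x y hxy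
    have hk := keval x y
    rcases eq_or_ne (a * x + b * y) 0 with hl | hl
    · have hne : eval ![-b, a] (C a * pderiv 1 f - C b * pderiv 0 f) ≠ 0 :=
        fun h0 => hnd (hdvd_iff.mpr h0)
      obtain ⟨t, ht, hx, hy⟩ : ∃ t : ℝ, t ≠ 0 ∧ x = t * (-b) ∧ y = t * a := by
        rcases eq_or_ne a 0 with ha | ha
        · have hb : b ≠ 0 := fun hb => hab ⟨ha, hb⟩
          have hy0 : y = 0 := by
            rw [ha] at hl
            simpa [hb] using hl
          have hx0 : x ≠ 0 := fun h => hxy ⟨h, hy0⟩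
          exact ⟨-x / b, div_ne_zero (neg_ne_zero.mpr hx0) hb, by field_simp,
            by rw [ha, hy0]; ring⟩
        · refine ⟨y / a, ?_, ?_, by field_simp⟩
          · intro h
            have hy0 : y = 0 := by
              field_simp at h
              simpa using h
            have hx0 : x = 0 := by
              rw [hy0] at hl
              simpa [ha] using hl
            exact hxy ⟨hx0, hy0⟩
          · field_simp
            linarith [hl]
      have hval : eval ![x, y] (C a * pderiv 1 f - C b * pderiv 0 f) =
          t ^ (D - 1) * eval ![-b, a] (C a * pderiv 1 f - C b * pderiv 0 f) := by
        rw [hx, hy]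
        exact HypAux.eval_scale hhom t (-b) a
      have hvne : a * eval ![x, y] (pderiv 1 f) - b * eval ![x, y] (pderiv 0 f) ≠ 0 := by
        rw [← hevh x y, hval]
        exact mul_ne_zero (pow_ne_zero _ ht) hne
      have hS : 0 < (a * eval ![x, y] (pderiv 1 f) - b * eval ![x, y] (pderiv 0 f)) ^ 2 :=
        by positivity
      rw [hl] at hk
      nlinarith [hk, hD1, hS]
    · have hS : 0 ≤ (a * eval ![x, y] (pderiv 1 f) - b * eval ![x, y] (pderiv 0 f)) ^ 2 :=
        sq_nonneg _
      have hL2 : 0 < (a * x + b * y) ^ 2 := by positivity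
      have h3 : ((D:ℝ) + 1) * (a * x + b * y) ^ 2 * eval ![x, y] (Hess f) < 0 := by
        have := mul_neg_of_pos_of_neg (mul_pos hD2 hL2) Hf
        simpa [mul_assoc] using this
      nlinarith [hk, h3, hS, hD1]
end

section
/- For every integer n ≥ 11 and every x ∈ [0,1], the inequality −8n² − 8n²x² + 16n⁴·(1−x²)²·x^{2(n−1)} < 0 holds. -/
open Real

lemma two_sq_lt_pow (n : ℕ) (hn : 11 ≤ n) : 2 * n ^ 2 < 2 ^ (n - 1) := by
  induction n with
  | zero => omega
  | succ k ih =>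
    rcases Nat.lt_or_ge k 11 with h | h
    · have hk : k = 10 := by omega
      subst hk; norm_num
    · have ihk := ih (by omega)
      have hk1 : k + 1 - 1 = k := rfl
      have h1 : 2 * (k + 1) ^ 2 ≤ 2 * (2 * k ^ 2) := by nlinarith
      have h2 : (2 : ℕ) * (2 * k ^ 2) < 2 * 2 ^ (k - 1) := by omega
      have h3 : (2 : ℕ) * 2 ^ (k - 1) = 2 ^ (k - 1 + 1) := by ring
      have h4 : k - 1 + 1 = k := by omega
      rw [hk1]
      calc 2 * (k + 1) ^ 2 ≤ 2 * (2 * k ^ 2) := h1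
        _ < 2 * 2 ^ (k - 1) := h2
        _ = 2 ^ (k - 1 + 1) := h3
        _ = 2 ^ k := by rw [h4]

set_option maxHeartbeats 1000000 in
lemma key_ineq (n : ℕ) (hn : 11 ≤ n) (t : ℝ) (ht0 : 0 ≤ t) (ht1 : t ≤ 1) :
    2 * (n : ℝ) ^ 2 * ((1 - t) ^ 2 * t ^ (n - 1)) < 1 + t := by
  have hn11 : (11 : ℝ) ≤ (n : ℝ) := by exact_mod_cast hn
  rcases le_or_gt t (1 / 2) with hhalf | hhalf
  · -- small t: use 2n² < 2^(n-1)
    have hpow : t ^ (n - 1) ≤ (1 / 2 : ℝ) ^ (n - 1) :=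
      pow_le_pow_left₀ ht0 hhalf (n - 1)
    have hsq : (1 - t) ^ 2 ≤ 1 := by nlinarith
    have hbig : 2 * (n : ℝ) ^ 2 < 2 ^ (n - 1) := by
      exact_mod_cast two_sq_lt_pow n hn
    have hpos2 : (0 : ℝ) < 2 ^ (n - 1) := by positivity
    have h1 : 2 * (n : ℝ) ^ 2 * ((1 - t) ^ 2 * t ^ (n - 1))
        ≤ 2 * (n : ℝ) ^ 2 * (1 / 2 : ℝ) ^ (n - 1) := by
      have hnn : (0 : ℝ) ≤ 2 * (n : ℝ) ^ 2 := by positivity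
      have hp : (0 : ℝ) ≤ t ^ (n - 1) := pow_nonneg ht0 _
      have hq : (1 - t) ^ 2 * t ^ (n - 1) ≤ (1 / 2 : ℝ) ^ (n - 1) := by
        calc (1 - t) ^ 2 * t ^ (n - 1) ≤ 1 * t ^ (n - 1) :=
              mul_le_mul_of_nonneg_right hsq hp
          _ = t ^ (n - 1) := by ring
          _ ≤ (1 / 2 : ℝ) ^ (n - 1) := hpow
      exact mul_le_mul_of_nonneg_left hq hnn
    have h2 : 2 * (n : ℝ) ^ 2 * (1 / 2 : ℝ) ^ (n - 1) < 1 := by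
      rw [div_pow, one_pow, mul_div_assoc', div_lt_one hpos2]
      linarith
    linarith
  · -- large t: exponential bound
    have hu0 : (0 : ℝ) ≤ 1 - t := by linarith
    have hmpos : (0 : ℝ) < (n : ℝ) - 1 := by linarith
    have hm10 : (10 : ℝ) ≤ (n : ℝ) - 1 := by linarith
    have hcast : ((n - 1 : ℕ) : ℝ) = (n : ℝ) - 1 := by
      have h1 : 1 ≤ n := by omega
      push_cast [Nat.cast_sub h1]; ring
    -- t ≤ exp (-(1-t))
    have ht_exp : t ≤ Real.exp (-(1 - t)) := by
      have := Real.add_one_le_exp (-(1 - t))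
      linarith
    have htpow : t ^ (n - 1) ≤ Real.exp (-(((n : ℝ) - 1) * (1 - t))) := by
      calc t ^ (n - 1) ≤ (Real.exp (-(1 - t))) ^ (n - 1) :=
            pow_le_pow_left₀ ht0 ht_exp (n - 1)
        _ = Real.exp (((n - 1 : ℕ) : ℝ) * (-(1 - t))) := by
            rw [← Real.exp_nat_mul]
        _ = Real.exp (-(((n : ℝ) - 1) * (1 - t))) := by rw [hcast]; ring_nf
    -- abbreviation: s = (n-1)(1-t) ≥ 0; s² ≤ 4 exp (s - 2)
    have hs0 : (0 : ℝ) ≤ ((n : ℝ) - 1) * (1 - t) := mul_nonneg (le_of_lt hmpos) hu0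
    have hkey : (((n : ℝ) - 1) * (1 - t)) ^ 2
        ≤ 4 * Real.exp (((n : ℝ) - 1) * (1 - t) - 2) := by
      have h1 : ((n : ℝ) - 1) * (1 - t) / 2
          ≤ Real.exp ((((n : ℝ) - 1) * (1 - t) - 2) / 2) := by
        have := Real.add_one_le_exp ((((n : ℝ) - 1) * (1 - t) - 2) / 2)
        linarith
      have h2 : (((n : ℝ) - 1) * (1 - t) / 2) ^ 2
          ≤ (Real.exp ((((n : ℝ) - 1) * (1 - t) - 2) / 2)) ^ 2 :=
        pow_le_pow_left₀ (by linarith) h1 2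
      have h3 : (Real.exp ((((n : ℝ) - 1) * (1 - t) - 2) / 2)) ^ 2
          = Real.exp (((n : ℝ) - 1) * (1 - t) - 2) := by
        rw [sq, ← Real.exp_add]; ring_nf
      nlinarith [h2, h3]
    have hexp_pos : (0 : ℝ) < Real.exp (-(((n : ℝ) - 1) * (1 - t))) := Real.exp_pos _
    -- s² exp(-s) ≤ 4 exp(-2)
    have h4 : (((n : ℝ) - 1) * (1 - t)) ^ 2 * Real.exp (-(((n : ℝ) - 1) * (1 - t)))
        ≤ 4 * Real.exp (-2) := by
      have hes : Real.exp (((n : ℝ) - 1) * (1 - t) - 2)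
          * Real.exp (-(((n : ℝ) - 1) * (1 - t))) = Real.exp (-2) := by
        rw [← Real.exp_add]; ring_nf
      calc (((n : ℝ) - 1) * (1 - t)) ^ 2 * Real.exp (-(((n : ℝ) - 1) * (1 - t)))
          ≤ 4 * Real.exp (((n : ℝ) - 1) * (1 - t) - 2)
            * Real.exp (-(((n : ℝ) - 1) * (1 - t))) :=
            mul_le_mul_of_nonneg_right hkey (le_of_lt hexp_pos)
        _ = 4 * Real.exp (-2) := by rw [mul_assoc, hes]
    -- exp(-2) < (17/125)
    have hexp2 : Real.exp (-2) < (17/125) := by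
      have h1 : (2.7182818283 : ℝ) < Real.exp 1 := Real.exp_one_gt_d9
      have h2 : (7.36 : ℝ) < Real.exp 2 := by
        have he : Real.exp 2 = Real.exp 1 * Real.exp 1 := by
          rw [← Real.exp_add]; norm_num
        nlinarith
      have h3 : Real.exp (-2) = 1 / Real.exp 2 := by rw [Real.exp_neg]; ring
      rw [h3, div_lt_iff₀ (by linarith)]
      nlinarith
    -- combine: 2n²(1-t)² t^{n-1} ≤ 2n²(1-t)² exp(-s) and m²(1-t)² exp(-s) ≤ 4exp(-2)
    have hm2 : (0 : ℝ) < ((n : ℝ) - 1) ^ 2 := by positivity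
    have hN : (n : ℝ) ^ 2 ≤ (121 / 100) * ((n : ℝ) - 1) ^ 2 := by nlinarith
    have hfin : 2 * (n : ℝ) ^ 2 * ((1 - t) ^ 2 * t ^ (n - 1)) ≤
        2 * (n : ℝ) ^ 2 * ((1 - t) ^ 2 * Real.exp (-(((n : ℝ) - 1) * (1 - t)))) := by
      have hnn : (0 : ℝ) ≤ 2 * (n : ℝ) ^ 2 * (1 - t) ^ 2 := by positivity
      calc 2 * (n : ℝ) ^ 2 * ((1 - t) ^ 2 * t ^ (n - 1))
          = 2 * (n : ℝ) ^ 2 * (1 - t) ^ 2 * t ^ (n - 1) := by ring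
        _ ≤ 2 * (n : ℝ) ^ 2 * (1 - t) ^ 2 * Real.exp (-(((n : ℝ) - 1) * (1 - t))) :=
            mul_le_mul_of_nonneg_left htpow hnn
        _ = 2 * (n : ℝ) ^ 2 * ((1 - t) ^ 2 * Real.exp (-(((n : ℝ) - 1) * (1 - t)))) := by
            ring
    have hlast : 2 * (n : ℝ) ^ 2 * ((1 - t) ^ 2 * Real.exp (-(((n : ℝ) - 1) * (1 - t))))
        < 3 / 2 := by
      -- multiply h4 by 2n²/m². From h4: (1-t)²exp(-s) ≤ 4exp(-2)/m²
      have h5 : (1 - t) ^ 2 * Real.exp (-(((n : ℝ) - 1) * (1 - t)))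
          ≤ 4 * Real.exp (-2) / ((n : ℝ) - 1) ^ 2 := by
        rw [le_div_iff₀ hm2]
        nlinarith [h4]
      have h6 : 2 * (n : ℝ) ^ 2 * ((1 - t) ^ 2 * Real.exp (-(((n : ℝ) - 1) * (1 - t))))
          ≤ 2 * (n : ℝ) ^ 2 * (4 * Real.exp (-2) / ((n : ℝ) - 1) ^ 2) :=
        mul_le_mul_of_nonneg_left h5 (by positivity)
      have h7 : 2 * (n : ℝ) ^ 2 * (4 * Real.exp (-2) / ((n : ℝ) - 1) ^ 2) < 3 / 2 := by
        have hEpos : (0 : ℝ) < Real.exp (-2) := Real.exp_pos _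
        have p1 : (n : ℝ) ^ 2 * Real.exp (-2)
            ≤ (121 / 100) * ((n : ℝ) - 1) ^ 2 * Real.exp (-2) :=
          mul_le_mul_of_nonneg_right hN hEpos.le
        have p2 : ((n : ℝ) - 1) ^ 2 * Real.exp (-2) < ((n : ℝ) - 1) ^ 2 * (17/125) :=
          mul_lt_mul_of_pos_left hexp2 hm2
        rw [mul_div_assoc', div_lt_iff₀ hm2]
        linarith [p1, p2, hm2]
      linarith
    linarith

theorem ineq_one (n : ℕ) (hn : 11 ≤ n) (x : ℝ) (hx : x ∈ Set.Icc (0 : ℝ) 1) :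
    -8 * (n : ℝ) ^ 2 - 8 * (n : ℝ) ^ 2 * x ^ 2
      + 16 * (n : ℝ) ^ 4 * ((1 - x ^ 2) ^ 2 * x ^ (2 * (n - 1))) < 0 := by
  obtain ⟨hx0, hx1⟩ := hx
  have ht0 : (0 : ℝ) ≤ x ^ 2 := by positivity
  have ht1 : x ^ 2 ≤ 1 := by nlinarith
  have hxpow : x ^ (2 * (n - 1)) = (x ^ 2) ^ (n - 1) := by
    rw [← pow_mul, mul_comm]
  rw [hxpow]
  have hkey := key_ineq n hn (x ^ 2) ht0 ht1
  have hnpos : (0 : ℝ) < (n : ℝ) ^ 2 := by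
    have : (0 : ℝ) < (n : ℝ) := by exact_mod_cast (by omega : 0 < n)
    positivity
  nlinarith [hkey, hnpos, mul_pos hnpos hnpos]
end

section
/- For every integer n ≥ 11 and every x ∈ [0,1], the inequality −12n − 4nx² + 16n³·(1−x²)²·x^{2(n−1)} < 0 holds. -/
theorem ineq_two (n : ℕ) (hn : 11 ≤ n) (x : ℝ) (hx : x ∈ Set.Icc (0 : ℝ) 1) :
    -12 * (n : ℝ) - 4 * (n : ℝ) * x ^ 2
      + 16 * (n : ℝ) ^ 3 * ((1 - x ^ 2) ^ 2 * x ^ (2 * (n - 1))) < 0 := by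
  obtain ⟨hx0, hx1⟩ := hx
  set t : ℝ := x ^ 2 with htdef
  have ht0 : 0 ≤ t := sq_nonneg x
  have ht1 : t ≤ 1 := by nlinarith
  set s : ℝ := 1 - t with hsdef
  have hs0 : 0 ≤ s := by simp [hsdef]; linarith
  have hs1 : s ≤ 1 := by simp [hsdef]; linarith
  set c : ℝ := ((n - 1 : ℕ) : ℝ) with hcdef
  have hc : c = (n : ℝ) - 1 := by
    rw [hcdef, Nat.cast_sub (by omega)]; norm_num
  have hn' : (11 : ℝ) ≤ (n : ℝ) := by exact_mod_cast hn
  have hc10 : (10 : ℝ) ≤ c := by rw [hc]; linarith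
  have hpow : x ^ (2 * (n - 1)) = (1 - s) ^ (n - 1) := by
    rw [pow_mul]
    congr 1
    simp [hsdef, htdef]
  have hexp1 : 1 - s ≤ Real.exp (-s) := by
    have := Real.add_one_le_exp (-s); linarith
  have h1 : (1 - s) ^ (n - 1) ≤ Real.exp (-s) ^ (n - 1) :=
    pow_le_pow_left₀ (by linarith) hexp1 _
  have h2 : Real.exp (-s) ^ (n - 1) = Real.exp (-(c * s)) := by
    rw [← Real.exp_nat_mul, hcdef]; ring_nf
  set u : ℝ := c * s / 2 with hudef
  have hu0 : 0 ≤ u := by positivity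
  have hue : u * Real.exp (-u) ≤ Real.exp (-1) := by
    have h := Real.add_one_le_exp (u - 1)
    have h' : u ≤ Real.exp u * Real.exp (-1) := by
      rw [← Real.exp_add, ← sub_eq_add_neg]; simpa using h
    calc u * Real.exp (-u) ≤ (Real.exp u * Real.exp (-1)) * Real.exp (-u) := by
          apply mul_le_mul_of_nonneg_right h' (Real.exp_nonneg _)
      _ = Real.exp (-1) := by rw [mul_comm (Real.exp u), mul_assoc, ← Real.exp_add]; simp
  have hc0 : (0 : ℝ) < c := by linarith
  have he0 : (0 : ℝ) < Real.exp 1 := Real.exp_pos 1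
  have hkey : s ^ 2 * Real.exp (-(c * s)) ≤ 4 / (c ^ 2 * Real.exp 1 ^ 2) := by
    have hexp2 : Real.exp (-(c * s)) = Real.exp (-u) ^ 2 := by
      rw [← Real.exp_nat_mul]
      congr 1
      rw [hudef]; push_cast; ring
    have hsq : (u * Real.exp (-u)) ^ 2 ≤ Real.exp (-1) ^ 2 :=
      pow_le_pow_left₀ (by positivity) hue 2
    have h4 : s ^ 2 * c ^ 2 = 4 * u ^ 2 := by rw [hudef]; ring
    have hinv : Real.exp (-1) ^ 2 * Real.exp 1 ^ 2 = 1 := by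
      rw [← mul_pow, ← Real.exp_add]; norm_num
    have h5 : (u * Real.exp (-u)) ^ 2 * Real.exp 1 ^ 2 ≤ 1 := by
      calc (u * Real.exp (-u)) ^ 2 * Real.exp 1 ^ 2
          ≤ Real.exp (-1) ^ 2 * Real.exp 1 ^ 2 :=
            mul_le_mul_of_nonneg_right hsq (by positivity)
        _ = 1 := hinv
    rw [hexp2, le_div_iff₀ (by positivity)]
    have h6 : s ^ 2 * Real.exp (-u) ^ 2 * (c ^ 2 * Real.exp 1 ^ 2)
        = 4 * ((u * Real.exp (-u)) ^ 2 * Real.exp 1 ^ 2) := by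
      linear_combination (Real.exp (-u) ^ 2 * Real.exp 1 ^ 2) * h4
    linarith [h5, h6]
  have hn0 : (0 : ℝ) < (n : ℝ) := by linarith
  have hmain : 16 * (n : ℝ) ^ 3 * (s ^ 2 * x ^ (2 * (n - 1))) < 12 * (n : ℝ) := by
    have hA : s ^ 2 * x ^ (2 * (n - 1)) ≤ 4 / (c ^ 2 * Real.exp 1 ^ 2) := by
      calc s ^ 2 * x ^ (2 * (n - 1)) = s ^ 2 * (1 - s) ^ (n - 1) := by rw [hpow]
        _ ≤ s ^ 2 * Real.exp (-(c * s)) := by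
            apply mul_le_mul_of_nonneg_left _ (sq_nonneg s)
            rw [← h2]; exact h1
        _ ≤ 4 / (c ^ 2 * Real.exp 1 ^ 2) := hkey
    have he : (2.71 : ℝ) ≤ Real.exp 1 := by
      have := Real.exp_one_gt_d9; linarith
    have hfin : 16 * (n : ℝ) ^ 3 * (4 / (c ^ 2 * Real.exp 1 ^ 2)) < 12 * (n : ℝ) := by
      rw [← mul_div_assoc, div_lt_iff₀ (by positivity)]
      have hcn : (n : ℝ) ≤ 1.1 * c := by rw [hc]; linarith
      have h7 : (n : ℝ) * (n : ℝ) ≤ (1.1 * c) * (1.1 * c) :=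
        mul_le_mul hcn hcn hn0.le (by positivity)
      have hA1 : (n : ℝ) * (n : ℝ) * (n : ℝ) ≤ (1.1 * c) * (1.1 * c) * (n : ℝ) :=
        mul_le_mul_of_nonneg_right h7 hn0.le
      have h8 : (2.71 : ℝ) * 2.71 ≤ Real.exp 1 * Real.exp 1 :=
        mul_le_mul he he (by norm_num) he0.le
      have hpos : (0 : ℝ) < c ^ 2 * (n : ℝ) := by positivity
      have hA2 : 2.71 * 2.71 * (c ^ 2 * (n : ℝ)) ≤ Real.exp 1 * Real.exp 1 * (c ^ 2 * (n : ℝ)) :=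
        mul_le_mul_of_nonneg_right h8 hpos.le
      nlinarith [hA1, hA2, hpos]
    calc 16 * (n : ℝ) ^ 3 * (s ^ 2 * x ^ (2 * (n - 1)))
        ≤ 16 * (n : ℝ) ^ 3 * (4 / (c ^ 2 * Real.exp 1 ^ 2)) :=
          mul_le_mul_of_nonneg_left hA (by positivity)
      _ < 12 * (n : ℝ) := hfin
  have h4nt : 0 ≤ 4 * (n : ℝ) * t := by positivity
  linarith [hmain, h4nt]
end

section
/- Any homogeneous polynomial of degree D ≥ 2 in two real variables which is a product of D real linear forms, pairwise distinct up to nonzero scalar multiples, is hyperbolic. -/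
open MvPolynomial Real

open Finset in
lemma pderiv_finset_prod {ι : Type*} [DecidableEq ι] (k : Fin 2) (s : Finset ι)
    (g : ι → MvPolynomial (Fin 2) ℝ) :
    pderiv k (∏ i ∈ s, g i) = ∑ i ∈ s, pderiv k (g i) * ∏ j ∈ s.erase i, g j := by
  induction s using Finset.induction_on with
  | empty => simp
  | insert _ _ hnot ih =>
    rename_i c s'
    rw [Finset.prod_insert hnot, pderiv_mul, ih, Finset.sum_insert hnot,
      Finset.erase_insert hnot, Finset.mul_sum]
    congr 1
    apply Finset.sum_congr rfl
    intro i hi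
    rw [Finset.erase_insert_of_ne (by rintro rfl; exact hnot hi),
      Finset.prod_insert (fun h => hnot (Finset.mem_of_mem_erase h))]
    ring

open Finset in
lemma eval_pderiv2 (D : ℕ) (a b : Fin D → ℝ) (x y : ℝ)
    (k l : Fin 2) (c d : Fin D → ℝ)
    (hk : ∀ i : Fin D, pderiv k (C (a i) * X 0 + C (b i) * X 1) = C (c i))
    (hl : ∀ i : Fin D, pderiv l (C (a i) * X 0 + C (b i) * X 1) = C (d i)) :
    eval ![x, y] (pderiv l (pderiv k (∏ i, (C (a i) * X 0 + C (b i) * X 1)))) =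
      ∑ i, ∑ j ∈ Finset.univ.erase i, c i * d j *
        ∏ m ∈ (Finset.univ.erase i).erase j, (a m * x + b m * y) := by
  rw [pderiv_finset_prod, map_sum (pderiv l)]
  simp_rw [hk, pderiv_C_mul, pderiv_finset_prod, hl]
  simp [Finset.mul_sum, mul_assoc, mul_sub, Finset.sum_sub_distrib]

lemma sq_sum_ne {u w : ℝ} (h : ¬(u = 0 ∧ w = 0)) : u ^ 2 + w ^ 2 ≠ 0 := by
  intro h0
  exact h ⟨by nlinarith [sq_nonneg u, sq_nonneg w], by nlinarith [sq_nonneg u, sq_nonneg w]⟩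

lemma delta_ne_zero {a1 b1 a2 b2 : ℝ} (h2 : ¬(a2 = 0 ∧ b2 = 0))
    (h : ∀ t : ℝ, ¬(a1 = t * a2 ∧ b1 = t * b2)) : a1 * b2 - a2 * b1 ≠ 0 := by
  intro hΔ
  have hq : a2 ^ 2 + b2 ^ 2 ≠ 0 := sq_sum_ne h2
  refine h ((a1 * a2 + b1 * b2) / (a2 ^ 2 + b2 ^ 2)) ⟨?_, ?_⟩
  · field_simp
    linear_combination b2 * hΔ
  · field_simp
    linear_combination (-a2) * hΔ

lemma bracket_id (x y T S d : ℝ) (h0 : x ^ 2 + y ^ 2 ≠ 0) :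
    ((d*x/(x^2+y^2)+T*y) * (d*x/(x^2+y^2)+T*y)
        - (d*x^2/(x^2+y^2)^2+2*x*y*T/(x^2+y^2)+y^2*S)) *
      ((d*y/(x^2+y^2)-T*x) * (d*y/(x^2+y^2)-T*x)
        - (d*y^2/(x^2+y^2)^2-2*x*y*T/(x^2+y^2)+x^2*S))
    - ((d*x/(x^2+y^2)+T*y)*(d*y/(x^2+y^2)-T*x)
        - (d*x*y/(x^2+y^2)^2+T*(y^2-x^2)/(x^2+y^2)-S*x*y))^2
    = -(d-1)*(d*S-T^2) := by
  field_simp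
  ring

open Finset in
lemma sum_affine (D : ℕ) (t : Fin D → ℝ) (p q r : ℝ) :
    ∑ i, (p + q * t i + r * t i ^ 2) =
      (D : ℝ) * p + q * (∑ i, t i) + r * (∑ i, t i ^ 2) := by
  simp [Finset.sum_add_distrib, ← Finset.mul_sum, Finset.card_univ]

open Finset in
lemma S_eq (D : ℕ) (v c d : Fin D → ℝ) (hv : ∀ i, v i ≠ 0) :
    ∑ i, ∑ j ∈ univ.erase i, c i * d j * ∏ m ∈ (univ.erase i).erase j, v m
    = (∏ m, v m) * ((∑ i, c i / v i) * (∑ i, d i / v i) - ∑ i, (c i / v i) * (d i / v i)) := by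
  have key : ∀ i j : Fin D, j ≠ i →
      (∏ m ∈ (univ.erase i).erase j, v m) = (∏ m, v m) / (v i * v j) := by
    intro i j hij
    rw [eq_div_iff (mul_ne_zero (hv i) (hv j)), mul_comm (v i) (v j), ← mul_assoc,
      Finset.prod_erase_mul _ _ (mem_erase.mpr ⟨hij, mem_univ j⟩),
      Finset.prod_erase_mul _ _ (mem_univ i)]
  have step : ∀ i : Fin D,
      (∑ j ∈ univ.erase i, c i * d j * ∏ m ∈ (univ.erase i).erase j, v m)
      = (∏ m, v m) * (c i / v i) * ((∑ j, d j / v j) - d i / v i) := by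
    intro i
    rw [← Finset.sum_erase_eq_sub (mem_univ i), Finset.mul_sum]
    apply Finset.sum_congr rfl
    intro j hj
    rw [key i j (mem_erase.mp hj).1]
    field_simp
  simp_rw [step]
  simp only [mul_sub, Finset.sum_sub_distrib, ← Finset.sum_mul, ← Finset.mul_sum, mul_assoc]

open Finset in
lemma S_eq_zero (D : ℕ) (v c d : Fin D → ℝ) (i0 : Fin D) (h0 : v i0 = 0) :
    ∑ i, ∑ j ∈ univ.erase i, c i * d j * ∏ m ∈ (univ.erase i).erase j, v m
    = d i0 * (∑ j ∈ univ.erase i0, c j * ∏ m ∈ (univ.erase i0).erase j, v m)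
      + c i0 * (∑ j ∈ univ.erase i0, d j * ∏ m ∈ (univ.erase i0).erase j, v m) := by
  rw [← Finset.sum_erase_add _ _ (mem_univ i0)]
  congr 1
  · have inner : ∀ i ∈ univ.erase i0,
        (∑ j ∈ univ.erase i, c i * d j * ∏ m ∈ (univ.erase i).erase j, v m)
        = d i0 * (c i * ∏ m ∈ (univ.erase i0).erase i, v m) := by
      intro i hi
      have hii0 : i ≠ i0 := (mem_erase.mp hi).1
      have hmem : i0 ∈ univ.erase i := mem_erase.mpr ⟨hii0.symm, mem_univ i0⟩
      rw [← Finset.sum_erase_add _ _ hmem]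
      have hz : ∀ j ∈ (univ.erase i).erase i0,
          c i * d j * ∏ m ∈ (univ.erase i).erase j, v m = 0 := by
        intro j hj
        have hji0 : j ≠ i0 := (mem_erase.mp hj).1
        have hmem2 : i0 ∈ (univ.erase i).erase j :=
          mem_erase.mpr ⟨hji0.symm, mem_erase.mpr ⟨hii0.symm, mem_univ i0⟩⟩
        rw [Finset.prod_eq_zero hmem2 h0, mul_zero]
      rw [Finset.sum_eq_zero hz, zero_add, Finset.erase_right_comm]
      ring
    rw [Finset.sum_congr rfl inner, ← Finset.mul_sum]
  · rw [Finset.mul_sum]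
    exact Finset.sum_congr rfl fun j _ => by ring

section Fracs
variable (A B x y : ℝ)

lemma fracA (hv : A * x + B * y ≠ 0) (hN : x ^ 2 + y ^ 2 ≠ 0) :
    A / (A * x + B * y) = x / (x ^ 2 + y ^ 2)
      + y * ((A * y - B * x) / ((A * x + B * y) * (x ^ 2 + y ^ 2)))
      + 0 * ((A * y - B * x) / ((A * x + B * y) * (x ^ 2 + y ^ 2))) ^ 2 := by
  field_simp
  ring

lemma fracB (hv : A * x + B * y ≠ 0) (hN : x ^ 2 + y ^ 2 ≠ 0) :
    B / (A * x + B * y) = y / (x ^ 2 + y ^ 2)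
      + (-x) * ((A * y - B * x) / ((A * x + B * y) * (x ^ 2 + y ^ 2)))
      + 0 * ((A * y - B * x) / ((A * x + B * y) * (x ^ 2 + y ^ 2))) ^ 2 := by
  field_simp
  ring

lemma fracAA (hv : A * x + B * y ≠ 0) (hN : x ^ 2 + y ^ 2 ≠ 0) :
    (A / (A * x + B * y)) * (A / (A * x + B * y)) = x ^ 2 / (x ^ 2 + y ^ 2) ^ 2
      + (2 * x * y / (x ^ 2 + y ^ 2)) * ((A * y - B * x) / ((A * x + B * y) * (x ^ 2 + y ^ 2)))
      + y ^ 2 * ((A * y - B * x) / ((A * x + B * y) * (x ^ 2 + y ^ 2))) ^ 2 := by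
  field_simp
  ring

lemma fracBB (hv : A * x + B * y ≠ 0) (hN : x ^ 2 + y ^ 2 ≠ 0) :
    (B / (A * x + B * y)) * (B / (A * x + B * y)) = y ^ 2 / (x ^ 2 + y ^ 2) ^ 2
      + (-(2 * x * y) / (x ^ 2 + y ^ 2)) * ((A * y - B * x) / ((A * x + B * y) * (x ^ 2 + y ^ 2)))
      + x ^ 2 * ((A * y - B * x) / ((A * x + B * y) * (x ^ 2 + y ^ 2))) ^ 2 := by
  field_simp
  ring

lemma fracAB (hv : A * x + B * y ≠ 0) (hN : x ^ 2 + y ^ 2 ≠ 0) :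
    (A / (A * x + B * y)) * (B / (A * x + B * y)) = x * y / (x ^ 2 + y ^ 2) ^ 2
      + ((y ^ 2 - x ^ 2) / (x ^ 2 + y ^ 2)) * ((A * y - B * x) / ((A * x + B * y) * (x ^ 2 + y ^ 2)))
      + (-(x * y)) * ((A * y - B * x) / ((A * x + B * y) * (x ^ 2 + y ^ 2))) ^ 2 := by
  field_simp
  ring

end Fracs

lemma reduce_aux (P e1 e2 e3 r : ℝ) (h : e1 * e2 - e3 ^ 2 = r) (hP : P ≠ 0) (hr : r < 0) :
    (P * e1) * (P * e2) - (P * e3) ^ 2 < 0 := by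
  have hh : (P * e1) * (P * e2) - (P * e3) ^ 2 = P ^ 2 * (e1 * e2 - e3 ^ 2) := by ring
  rw [hh, h]
  exact mul_neg_of_pos_of_neg (by positivity) hr

open Finset in
set_option maxHeartbeats 1000000 in
theorem product_of_distinct_lines_hyperbolic (D : ℕ) (hD : 2 ≤ D) (a b : Fin D → ℝ)
    (hne : ∀ i, ¬(a i = 0 ∧ b i = 0))
    (hdist : ∀ i j, i ≠ j → ∀ t : ℝ, ¬(a i = t * a j ∧ b i = t * b j)) :
    Hyperbolic (∏ i, (C (a i) * X 0 + C (b i) * X 1)) := by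
  intro x y hp
  have hpd0 : ∀ i : Fin D, pderiv (0 : Fin 2) (C (a i) * X 0 + C (b i) * X 1) = C (a i) := by
    intro i
    simp [pderiv_C_mul, pderiv_X_self, pderiv_X_of_ne (show (1 : Fin 2) ≠ 0 by decide)]
  have hpd1 : ∀ i : Fin D, pderiv (1 : Fin 2) (C (a i) * X 0 + C (b i) * X 1) = C (b i) := by
    intro i
    simp [pderiv_C_mul, pderiv_X_self, pderiv_X_of_ne (show (0 : Fin 2) ≠ 1 by decide)]
  have hN0 : x ^ 2 + y ^ 2 ≠ 0 := sq_sum_ne hp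
  simp only [Hess, map_sub, map_mul, map_pow,
    eval_pderiv2 D a b x y 0 0 a a hpd0 hpd0,
    eval_pderiv2 D a b x y 1 1 b b hpd1 hpd1,
    eval_pderiv2 D a b x y 0 1 a b hpd0 hpd1]
  by_cases hvz : ∀ i : Fin D, a i * x + b i * y ≠ 0
  · -- Case 1: no factor vanishes at (x, y)
    simp only [S_eq D (fun i => a i * x + b i * y) a a hvz,
      S_eq D (fun i => a i * x + b i * y) b b hvz,
      S_eq D (fun i => a i * x + b i * y) a b hvz]
    set t : Fin D → ℝ :=
      fun i => (a i * y - b i * x) / ((a i * x + b i * y) * (x ^ 2 + y ^ 2)) with htdef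
    have hA : (∑ i, a i / (a i * x + b i * y))
        = (D : ℝ) * x / (x ^ 2 + y ^ 2) + (∑ i, t i) * y := by
      rw [Finset.sum_congr rfl (fun i _ => fracA (a i) (b i) x y (hvz i) hN0), sum_affine]
      ring
    have hB : (∑ i, b i / (a i * x + b i * y))
        = (D : ℝ) * y / (x ^ 2 + y ^ 2) - (∑ i, t i) * x := by
      rw [Finset.sum_congr rfl (fun i _ => fracB (a i) (b i) x y (hvz i) hN0), sum_affine]
      ring
    have hAA : (∑ i, (a i / (a i * x + b i * y)) * (a i / (a i * x + b i * y)))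
        = (D : ℝ) * x ^ 2 / (x ^ 2 + y ^ 2) ^ 2
          + 2 * x * y * (∑ i, t i) / (x ^ 2 + y ^ 2) + y ^ 2 * (∑ i, t i ^ 2) := by
      rw [Finset.sum_congr rfl (fun i _ => fracAA (a i) (b i) x y (hvz i) hN0), sum_affine]
      ring
    have hBB : (∑ i, (b i / (a i * x + b i * y)) * (b i / (a i * x + b i * y)))
        = (D : ℝ) * y ^ 2 / (x ^ 2 + y ^ 2) ^ 2
          - 2 * x * y * (∑ i, t i) / (x ^ 2 + y ^ 2) + x ^ 2 * (∑ i, t i ^ 2) := by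
      rw [Finset.sum_congr rfl (fun i _ => fracBB (a i) (b i) x y (hvz i) hN0), sum_affine]
      ring
    have hAB : (∑ i, (a i / (a i * x + b i * y)) * (b i / (a i * x + b i * y)))
        = (D : ℝ) * x * y / (x ^ 2 + y ^ 2) ^ 2
          + (∑ i, t i) * (y ^ 2 - x ^ 2) / (x ^ 2 + y ^ 2) - (∑ i, t i ^ 2) * x * y := by
      rw [Finset.sum_congr rfl (fun i _ => fracAB (a i) (b i) x y (hvz i) hN0), sum_affine]
      ring
    rw [hA, hB, hAA, hBB, hAB]
    have hd2 : (2 : ℝ) ≤ (D : ℝ) := by exact_mod_cast hD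
    have hsum2 : ∑ i, ∑ j, (t i - t j) ^ 2
        = 2 * ((D : ℝ) * (∑ i, t i ^ 2) - (∑ i, t i) ^ 2) := by
      simp only [sub_sq, Finset.sum_add_distrib, Finset.sum_sub_distrib, Finset.sum_const,
        Finset.card_univ, Fintype.card_fin, nsmul_eq_mul, ← Finset.mul_sum, ← Finset.sum_mul]
      ring
    obtain ⟨i0, i1, h01⟩ : ∃ i0 i1 : Fin D, i0 ≠ i1 :=
      ⟨⟨0, by omega⟩, ⟨1, by omega⟩, by intro h; simpa using congrArg Fin.val h⟩
    have hΔ01 : a i0 * b i1 - a i1 * b i0 ≠ 0 := delta_ne_zero (hne i1) (hdist i0 i1 h01)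
    have ht01 : t i0 ≠ t i1 := by
      intro he
      simp only [htdef] at he
      rw [div_eq_div_iff (mul_ne_zero (hvz i0) hN0) (mul_ne_zero (hvz i1) hN0)] at he
      have h2 : ((x ^ 2 + y ^ 2) * (x ^ 2 + y ^ 2)) * (a i0 * b i1 - a i1 * b i0) = 0 := by
        linear_combination he
      exact hΔ01 ((mul_eq_zero.mp h2).resolve_left (mul_ne_zero hN0 hN0))
    have hpos : 0 < ∑ i, ∑ j, (t i - t j) ^ 2 := by
      have h1 : (t i0 - t i1) ^ 2 ≤ ∑ j, (t i0 - t j) ^ 2 :=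
        Finset.single_le_sum (f := fun j => (t i0 - t j) ^ 2)
          (fun j _ => sq_nonneg _) (mem_univ i1)
      have h2 : (∑ j, (t i0 - t j) ^ 2) ≤ ∑ i, ∑ j, (t i - t j) ^ 2 :=
        Finset.single_le_sum (f := fun i => ∑ j, (t i - t j) ^ 2)
          (fun i _ => Finset.sum_nonneg fun j _ => sq_nonneg _) (mem_univ i0)
      have h3 : 0 < (t i0 - t i1) ^ 2 := sq_pos_iff.mpr (sub_ne_zero.mpr ht01)
      linarith
    have hTS : 0 < (D : ℝ) * (∑ i, t i ^ 2) - (∑ i, t i) ^ 2 := by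
      rw [hsum2] at hpos
      linarith
    have hPne : (∏ m, (a m * x + b m * y)) ≠ 0 :=
      Finset.prod_ne_zero_iff.mpr (fun i _ => hvz i)
    exact reduce_aux _ _ _ _ _
      (bracket_id x y (∑ i, t i) (∑ i, t i ^ 2) (D : ℝ) hN0) hPne
      (by nlinarith [hTS, hd2])
  · -- Case 2: the factor i0 vanishes at (x, y)
    push_neg at hvz
    obtain ⟨i0, hv0⟩ := hvz
    simp only [S_eq_zero D (fun i => a i * x + b i * y) a a i0 hv0,
      S_eq_zero D (fun i => a i * x + b i * y) b b i0 hv0,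
      S_eq_zero D (fun i => a i * x + b i * y) a b i0 hv0]
    -- find lam with x = lam * b i0, y = -(lam * a i0)
    obtain ⟨lam, hlam, hx, hy⟩ : ∃ lam : ℝ, lam ≠ 0 ∧ x = lam * b i0 ∧ y = -(lam * a i0) := by
      by_cases hb : b i0 = 0
      · have ha : a i0 ≠ 0 := fun h => hne i0 ⟨h, hb⟩
        have hx0 : x = 0 := by
          rw [hb] at hv0
          simpa [ha] using hv0
        have hy0 : y ≠ 0 := fun h => hp ⟨hx0, h⟩
        refine ⟨-(y / a i0), by simpa using ⟨hy0, ha⟩, by rw [hb, hx0]; ring, by field_simp⟩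
      · have hx0 : x ≠ 0 := by
          intro h
          rw [h] at hv0
          exact hp ⟨h, by simpa [hb] using hv0⟩
        refine ⟨x / b i0, div_ne_zero hx0 hb, by field_simp, ?_⟩
        field_simp
        linear_combination hv0
    have hΔ : ∀ j : Fin D, j ≠ i0 → a i0 * b j - a j * b i0 ≠ 0 := fun j hj =>
      delta_ne_zero (hne j) (hdist i0 j (Ne.symm hj))
    have hvj : ∀ j : Fin D, j ≠ i0 → a j * x + b j * y = -(lam * (a i0 * b j - a j * b i0)) := by
      intro j _
      rw [hx, hy]
      ring
    set P' : ℝ := ∏ m ∈ univ.erase i0, (a m * x + b m * y) with hP'def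
    have hP'ne : P' ≠ 0 := Finset.prod_ne_zero_iff.mpr fun j hj =>
      (hvj j (mem_erase.mp hj).1).symm ▸ neg_ne_zero.mpr (mul_ne_zero hlam (hΔ j (mem_erase.mp hj).1))
    set Ra : ℝ := ∑ j ∈ univ.erase i0, a j * ∏ m ∈ (univ.erase i0).erase j, (a m * x + b m * y)
      with hRa
    set Rb : ℝ := ∑ j ∈ univ.erase i0, b j * ∏ m ∈ (univ.erase i0).erase j, (a m * x + b m * y)
      with hRb
    have hval : a i0 * Rb - b i0 * Ra = (((D : ℕ) : ℝ) - 1) * (-(P' / lam)) := by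
      rw [hRa, hRb, Finset.mul_sum, Finset.mul_sum, ← Finset.sum_sub_distrib]
      have e : ∀ j ∈ univ.erase i0,
          a i0 * (b j * ∏ m ∈ (univ.erase i0).erase j, (a m * x + b m * y))
            - b i0 * (a j * ∏ m ∈ (univ.erase i0).erase j, (a m * x + b m * y))
          = -(P' / lam) := by
        intro j hj
        have hj0 : j ≠ i0 := (mem_erase.mp hj).1
        have hW : (a j * x + b j * y) * (∏ m ∈ (univ.erase i0).erase j, (a m * x + b m * y))
            = P' := by
          rw [mul_comm, hP'def]
          exact Finset.prod_erase_mul _ _ hj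
        have hd : a i0 * b j - a j * b i0 = -((a j * x + b j * y) / lam) := by
          rw [hvj j hj0]
          field_simp
        calc a i0 * (b j * ∏ m ∈ (univ.erase i0).erase j, (a m * x + b m * y))
              - b i0 * (a j * ∏ m ∈ (univ.erase i0).erase j, (a m * x + b m * y))
            = (a i0 * b j - a j * b i0)
              * ∏ m ∈ (univ.erase i0).erase j, (a m * x + b m * y) := by ring
          _ = -((a j * x + b j * y) / lam)
              * ∏ m ∈ (univ.erase i0).erase j, (a m * x + b m * y) := by rw [hd]
          _ = -(P' / lam) := by rw [neg_mul, div_mul_eq_mul_div, hW]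
      rw [Finset.sum_congr rfl e, Finset.sum_const, Finset.card_erase_of_mem (mem_univ i0),
        Finset.card_univ, Fintype.card_fin, nsmul_eq_mul]
      push_cast [show 1 ≤ D by omega]
      ring
    have hvalne : a i0 * Rb - b i0 * Ra ≠ 0 := by
      rw [hval]
      have hD1 : (((D : ℕ) : ℝ) - 1) ≠ 0 := by
        have : (2 : ℝ) ≤ (D : ℝ) := by exact_mod_cast hD
        linarith
      exact mul_ne_zero hD1 (neg_ne_zero.mpr (div_ne_zero hP'ne hlam))
    have hgoal : (a i0 * Ra + a i0 * Ra) * (b i0 * Rb + b i0 * Rb)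
        - (b i0 * Ra + a i0 * Rb) ^ 2 = -((a i0 * Rb - b i0 * Ra) ^ 2) := by ring
    rw [hgoal]
    exact neg_lt_zero.mpr (sq_pos_iff.mpr hvalne)
end

section
/- Let n, k ≥ 1, let g(x,y) = ∏_{i=1}^{k}(x² − i²y²), f(x,y) = x·(x^{2n}+y^{2n})·g(x,y), and ℓ(x,y) = x − (k+1)y. Then the polynomial ℓ_x·f_y − ℓ_y·f_x, restricted to y = 1, is strictly positive at x = k+1; hence ℓ does not divide ℓ_x·f_y − ℓ_y·f_x. -/
open MvPolynomial Real

noncomputable def Dop {σ : Type} [DecidableEq σ] (v : σ → ℝ) (c : ℝ) (x0 x1 : σ)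
    (p : MvPolynomial σ ℝ) : ℝ :=
  eval v (pderiv x1 p) + c * eval v (pderiv x0 p)

lemma Dop_mul {σ : Type} [DecidableEq σ] (v : σ → ℝ) (c : ℝ) (x0 x1 : σ)
    (p q : MvPolynomial σ ℝ) :
    Dop v c x0 x1 (p * q)
      = Dop v c x0 x1 p * eval v q + eval v p * Dop v c x0 x1 q := by
  simp [Dop, pderiv_mul, map_mul, map_add]; ring

lemma Dop_pow {σ : Type} [DecidableEq σ] (v : σ → ℝ) (c : ℝ) (x0 x1 : σ)
    (m : ℕ) (p : MvPolynomial σ ℝ) :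
    Dop v c x0 x1 (p ^ m) = m * (eval v p) ^ (m - 1) * Dop v c x0 x1 p := by
  simp [Dop, Derivation.leibniz_pow, map_smul, smul_eq_mul, map_mul, map_pow]; ring

lemma prod_good {σ : Type} [DecidableEq σ] (v : σ → ℝ) (c : ℝ) (x0 x1 : σ)
    (s : Finset ℕ) (p : ℕ → MvPolynomial σ ℝ)
    (h : ∀ i ∈ s, 0 < eval v (p i) ∧ 0 ≤ Dop v c x0 x1 (p i)) :
    0 < eval v (∏ i ∈ s, p i) ∧ 0 ≤ Dop v c x0 x1 (∏ i ∈ s, p i) := by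
  induction s using Finset.cons_induction with
  | empty => constructor <;> simp [Dop]
  | cons i s hi ih =>
      rw [Finset.prod_cons]
      obtain ⟨h1, h2⟩ := h i (Finset.mem_cons_self i s)
      obtain ⟨h3, h4⟩ := ih (fun j hj => h j (Finset.mem_cons_of_mem hj))
      refine ⟨by rw [map_mul]; positivity, ?_⟩
      rw [Dop_mul]
      positivity

lemma Dpos {σ : Type} [DecidableEq σ] (x0 x1 : σ) (hx : x0 ≠ x1) (v : σ → ℝ)
    (n k : ℕ) (hk : 1 ≤ k) (hv0 : v x0 = (k : ℝ) + 1) (hv1 : v x1 = 1) :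
    0 < eval v
        (pderiv x1 (X x0 * (X x0 ^ (2 * n) + X x1 ^ (2 * n))
            * ∏ i ∈ Finset.Icc 1 k, (X x0 ^ 2 - C ((i : ℝ) ^ 2) * X x1 ^ 2))
          + C ((k : ℝ) + 1) * pderiv x0 (X x0 * (X x0 ^ (2 * n) + X x1 ^ (2 * n))
            * ∏ i ∈ Finset.Icc 1 k, (X x0 ^ 2 - C ((i : ℝ) ^ 2) * X x1 ^ 2))) := by
  set c : ℝ := (k : ℝ) + 1 with hc
  set g : MvPolynomial σ ℝ := ∏ i ∈ Finset.Icc 1 k, (X x0 ^ 2 - C ((i : ℝ) ^ 2) * X x1 ^ 2) with hg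
  set h : MvPolynomial σ ℝ := X x0 ^ (2 * n) + X x1 ^ (2 * n) with hh
  have key : eval v (pderiv x1 (X x0 * h * g) + C c * pderiv x0 (X x0 * h * g))
      = Dop v c x0 x1 (X x0 * h * g) := by
    simp [Dop, map_add, map_mul]
  rw [key]
  have hck : 0 < c := by rw [hc]; positivity
  have hgood : 0 < eval v g ∧ 0 ≤ Dop v c x0 x1 g := by
    apply prod_good
    intro i hi
    have hik : (i : ℝ) ≤ k := by exact_mod_cast (Finset.mem_Icc.mp hi).2
    have hknn : (0:ℝ) ≤ k := Nat.cast_nonneg k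
    have hlt : (i : ℝ)^2 < c^2 := by rw [hc]; nlinarith
    constructor
    · simp only [map_sub, map_mul, map_pow, eval_X, eval_C, hv0, hv1, ← hc]
      nlinarith
    · simp only [Dop, map_sub, map_mul, map_add, pderiv_mul, pderiv_C, pderiv_X,
        Derivation.leibniz_pow, map_smul]
      simp [pderiv_X, hx, hx.symm, hv0, hv1, ← hc, smul_eq_mul]
      nlinarith
  have hEvX0 : eval v (X x0) = c := by simp [hv0, hc]
  have hEvX1 : eval v (X x1) = 1 := by simp [hv1]
  have hDX0 : Dop v c x0 x1 (X x0) = c := by simp [Dop, pderiv_X, hx, hx.symm]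
  have hDX1 : Dop v c x0 x1 (X x1) = 1 := by simp [Dop, pderiv_X, hx, hx.symm]
  have hEvh : 0 < eval v h := by
    simp only [hh, map_add, map_pow, hEvX0, hEvX1]
    positivity
  have hDh : 0 ≤ Dop v c x0 x1 h := by
    have : Dop v c x0 x1 h = Dop v c x0 x1 (X x0 ^ (2*n)) + Dop v c x0 x1 (X x1 ^ (2*n)) := by
      simp [Dop, hh, map_add]; ring
    rw [this, Dop_pow, Dop_pow, hDX0, hDX1, hEvX0, hEvX1]
    positivity
  have hDxh : 0 < Dop v c x0 x1 (X x0 * h) := by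
    rw [Dop_mul, hDX0, hEvX0]
    nlinarith
  have hEvxh : 0 < eval v (X x0 * h) := by rw [map_mul, hEvX0]; positivity
  rw [Dop_mul]
  nlinarith [hgood.1, hgood.2]

theorem no_factor_ell (n k : ℕ) (hn : 1 ≤ n) (hk : 1 ≤ k) :
    0 < eval ![(k : ℝ) + 1, 1]
        (pderiv 1 (X 0 * (X 0 ^ (2 * n) + X 1 ^ (2 * n))
            * ∏ i ∈ Finset.Icc 1 k, (X 0 ^ 2 - C ((i : ℝ) ^ 2) * X 1 ^ 2))
          + C ((k : ℝ) + 1) * pderiv 0 (X 0 * (X 0 ^ (2 * n) + X 1 ^ (2 * n))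
            * ∏ i ∈ Finset.Icc 1 k, (X 0 ^ 2 - C ((i : ℝ) ^ 2) * X 1 ^ 2))) ∧
    ¬ (X 0 - C ((k : ℝ) + 1) * X 1) ∣
        (pderiv 1 (X 0 * (X 0 ^ (2 * n) + X 1 ^ (2 * n))
            * ∏ i ∈ Finset.Icc 1 k, (X 0 ^ 2 - C ((i : ℝ) ^ 2) * X 1 ^ 2))
          + C ((k : ℝ) + 1) * pderiv 0 (X 0 * (X 0 ^ (2 * n) + X 1 ^ (2 * n))
            * ∏ i ∈ Finset.Icc 1 k, (X 0 ^ 2 - C ((i : ℝ) ^ 2) * X 1 ^ 2))) := by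
  constructor
  · exact Dpos (0 : Fin 2) 1 (by decide) ![(k : ℝ) + 1, 1] n k hk (by simp) (by simp)
  · rintro ⟨q, hq⟩
    set v : ℕ → ℝ := fun i => if i = 0 then (k : ℝ) + 1 else 1 with hv
    have hpos := Dpos (0 : ℕ) 1 (by decide) v n k hk (by simp [hv]) (by simp [hv])
    rw [hq] at hpos
    simp [map_mul, map_sub, hv] at hpos
end

section
/- Let n, k ≥ 1, let f(x,y) = x·(x^{2n}+y^{2n})·∏_{i=1}^{k}(x² − i²y²), P = (x − (k+1)y)·f, and L(x,y) = x + (k+1)y. Then the polynomial L_x·P_y − L_y·P_x, restricted to y = 1, is strictly positive at x = −(k+1); hence L does not divide L_x·P_y − L_y·P_x. -/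
open MvPolynomial Real

open TrivSqZeroExt

local notation "u" => (inl 1 + inr 1 : DualNumber ℝ)

section generic
variable {σ : Type*} (c : ℝ) (v : σ → DualNumber ℝ) (w : σ → ℝ) (a b : σ)

lemma fst_ev (hfst : ∀ j, (v j).fst = w j) (f : MvPolynomial σ ℝ) :
    (eval₂ (algebraMap ℝ (DualNumber ℝ)) v f).fst = eval w f := by
  induction f using MvPolynomial.induction_on with
  | C r => simp [eval₂_C, TrivSqZeroExt.algebraMap_eq_inl]
  | add p q hp hq => simp [eval₂_add, hp, hq]
  | mul_X p i hp => rw [eval₂_mul, eval₂_X, fst_mul, hp, hfst, eval_mul, eval_X]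

lemma snd_ev (hab : a ≠ b) (hfst : ∀ j, (v j).fst = w j)
    (hsa : (v a).snd = -c) (hsb : (v b).snd = 1)
    (hso : ∀ j, j ≠ a → j ≠ b → (v j).snd = 0) (f : MvPolynomial σ ℝ) :
    (eval₂ (algebraMap ℝ (DualNumber ℝ)) v f).snd
      = eval w (pderiv b f) - c * eval w (pderiv a f) := by
  classical
  induction f using MvPolynomial.induction_on with
  | C r => simp [eval₂_C, TrivSqZeroExt.algebraMap_eq_inl]
  | add p q hp hq => simp only [eval₂_add, snd_add, hp, hq, map_add]; ring
  | mul_X p i hp =>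
    rw [eval₂_mul, eval₂_X, snd_mul, hp, fst_ev v w hfst, hfst,
      MulOpposite.smul_eq_mul_unop, MulOpposite.unop_op, smul_eq_mul]
    by_cases hia : i = a
    · subst hia
      rw [hsa, pderiv_mul, pderiv_mul, pderiv_X_self, pderiv_X_of_ne hab]
      simp only [map_add, map_mul, eval_X, mul_zero, mul_one, add_zero, eval_mul]
      ring
    · by_cases hib : i = b
      · subst hib
        rw [hsb, pderiv_mul, pderiv_mul, pderiv_X_self, pderiv_X_of_ne (Ne.symm hab)]
        simp only [map_add, map_mul, eval_X, mul_zero, mul_one, add_zero, eval_mul]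
        ring
      · rw [hso i hia hib, pderiv_mul, pderiv_mul,
          pderiv_X_of_ne hib, pderiv_X_of_ne hia]
        simp only [map_add, map_mul, eval_X, mul_zero, add_zero, eval_mul]
        ring

end generic

lemma upow (m : ℕ) : u ^ m = inl 1 + inr (m : ℝ) := by
  induction m with
  | zero => simp
  | succ m ih =>
    rw [pow_succ, ih]
    ext
    · simp
    · push_cast
      simp [snd_mul]
      ring

lemma inlA_mul_upow_snd (A : ℝ) (m : ℕ) :
    ((inl A : DualNumber ℝ) * u ^ m).snd = A * m := by
  rw [upow, snd_mul]
  simp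

lemma nf_mul (a b : ℝ) (p q : ℕ) :
    (inl a * u ^ p) * (inl b * u ^ q) = inl (a * b) * u ^ (p + q) := by
  rw [mul_mul_mul_comm, inl_mul_inl, pow_add]

lemma nf_add (a b : ℝ) (p : ℕ) :
    inl a * u ^ p + inl b * u ^ p = inl (a + b) * u ^ p := by
  rw [← add_mul, inl_add]

lemma nf_sub (a b : ℝ) (p : ℕ) :
    inl a * u ^ p - inl b * u ^ p = inl (a - b) * u ^ p := by
  rw [← sub_mul, inl_sub]

lemma nf_pow (a : ℝ) (p m : ℕ) :
    (inl a * u ^ p) ^ m = inl (a ^ m) * u ^ (p * m) := by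
  rw [mul_pow, ← inl_pow, ← pow_mul]

lemma nf_prod {α : Type*} (s : Finset α) (f : α → ℝ) (p : ℕ) :
    ∏ i ∈ s, ((inl (f i) : DualNumber ℝ) * u ^ p) = inl (∏ i ∈ s, f i) * u ^ (s.card * p) := by
  rw [Finset.prod_mul_distrib, Finset.prod_const, ← pow_mul, mul_comm p s.card]
  congr 1
  exact (map_prod (inlHom ℝ ℝ) f s).symm

section big
variable {σ : Type*} (c : ℝ) (v : σ → DualNumber ℝ) (a b : σ)

lemma snd_big (hva : v a = inl (-c) + inr (-c)) (hvb : v b = inl 1 + inr 1) (n k : ℕ) :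
    (eval₂Hom (algebraMap ℝ (DualNumber ℝ)) v
      ((X a - C c * X b) * (X a * (X a ^ (2*n) + X b ^ (2*n))
        * ∏ i ∈ Finset.Icc 1 k, (X a ^ 2 - C ((i:ℝ)^2) * X b ^ 2)))).snd
    = (-c - c) * ((-c) * (((-c)^(2*n) + 1^(2*n)) * ∏ i ∈ Finset.Icc 1 k, ((-c)^2-(i:ℝ)^2*1^2)))
        * ((1:ℕ) + ((1:ℕ) + (2*n + k*2)) : ℕ) := by
  have hXa : eval₂Hom (algebraMap ℝ (DualNumber ℝ)) v (X a) = inl (-c) * u ^ 1 := by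
    rw [eval₂Hom_X', hva, pow_one, mul_add, inl_mul_inl, inl_mul_inr]
    norm_num
  have hXb : eval₂Hom (algebraMap ℝ (DualNumber ℝ)) v (X b) = inl 1 * u ^ 1 := by
    rw [eval₂Hom_X', hvb, pow_one, inl_one, one_mul]
  have hCr : ∀ r : ℝ, eval₂Hom (algebraMap ℝ (DualNumber ℝ)) v (C r) = inl r * u ^ 0 := by
    intro r; simp [TrivSqZeroExt.algebraMap_eq_inl]
  simp only [map_sub, map_mul, map_add, map_pow, map_prod, hXa, hXb, hCr,
    nf_mul, nf_add, nf_sub, nf_pow, nf_prod, one_mul, mul_one, zero_add, add_zero,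
    Nat.card_Icc, Nat.add_sub_cancel]
  rw [inlA_mul_upow_snd]
  push_cast
  ring

end big

lemma prodpos (k : ℕ) : 0 < ∏ i ∈ Finset.Icc 1 k, (((k:ℝ)+1)^2 - (i:ℝ)^2) := by
  apply Finset.prod_pos
  intro i hi
  have h2 := (Finset.mem_Icc.mp hi).2
  have hlt : (i:ℝ) < (k:ℝ) + 1 := by
    have : (i:ℝ) ≤ (k:ℝ) := by exact_mod_cast h2
    linarith
  have : (i:ℝ)^2 < ((k:ℝ)+1)^2 := by
    apply pow_lt_pow_left₀ hlt (by positivity)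
    norm_num
  linarith

/-- The main positivity workhorse, index-type generic. -/
lemma eval_pos {σ : Type*} (n k : ℕ) (w : σ → ℝ) (a b : σ) (hab : a ≠ b)
    (hwa : w a = -((k:ℝ)+1)) (hwb : w b = 1) (hwo : ∀ j, j ≠ a → j ≠ b → w j = 1) :
    0 < eval w
        (pderiv b ((X a - C ((k : ℝ) + 1) * X b) * (X a * (X a ^ (2 * n) + X b ^ (2 * n))
            * ∏ i ∈ Finset.Icc 1 k, (X a ^ 2 - C ((i : ℝ) ^ 2) * X b ^ 2)))
          - C ((k : ℝ) + 1) * pderiv a ((X a - C ((k : ℝ) + 1) * X b)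
            * (X a * (X a ^ (2 * n) + X b ^ (2 * n))
            * ∏ i ∈ Finset.Icc 1 k, (X a ^ 2 - C ((i : ℝ) ^ 2) * X b ^ 2)))) := by
  classical
  set c : ℝ := (k : ℝ) + 1 with hc
  set v : σ → DualNumber ℝ := fun j =>
    if j = a then inl (-c) + inr (-c) else if j = b then inl 1 + inr 1 else inl 1 with hv
  have hva : v a = inl (-c) + inr (-c) := by simp [hv]
  have hvb : v b = inl 1 + inr 1 := by
    have hba : b ≠ a := Ne.symm hab
    simp [hv, hba]
  have hfst : ∀ j, (v j).fst = w j := by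
    intro j
    by_cases hja : j = a
    · subst hja; simp [hva, hwa]
    · by_cases hjb : j = b
      · subst hjb; simp [hvb, hwb]
      · simp [hv, hja, hjb, hwo j hja hjb]
  have hsa : (v a).snd = -c := by simp [hva]
  have hsb : (v b).snd = 1 := by simp [hvb]
  have hso : ∀ j, j ≠ a → j ≠ b → (v j).snd = 0 := by
    intro j hja hjb; simp [hv, hja, hjb]
  set P : MvPolynomial σ ℝ :=
    (X a - C c * X b) * (X a * (X a ^ (2 * n) + X b ^ (2 * n))
      * ∏ i ∈ Finset.Icc 1 k, (X a ^ 2 - C ((i : ℝ) ^ 2) * X b ^ 2)) with hP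
  have hval : eval w (pderiv b P - C c * pderiv a P)
      = eval w (pderiv b P) - c * eval w (pderiv a P) := by simp
  have hsnd := snd_ev c v w a b hab hfst hsa hsb hso P
  have hbig := snd_big c v a b hva hvb n k
  rw [show (eval₂Hom (algebraMap ℝ (DualNumber ℝ)) v) P
      = eval₂ (algebraMap ℝ (DualNumber ℝ)) v P from rfl] at hbig
  have hne : Even (2 * n) := even_two_mul n
  have hE : eval w (pderiv b P - C c * pderiv a P)
      = (-c - c) * ((-c) * (((-c)^(2*n) + 1^(2*n))
          * ∏ i ∈ Finset.Icc 1 k, ((-c)^2-(i:ℝ)^2*1^2)))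
        * ((1:ℕ) + ((1:ℕ) + (2*n + k*2)) : ℕ) := by
    rw [hval, ← hsnd, ← hbig]
  have hprod : ∏ i ∈ Finset.Icc 1 k, ((-c)^2-(i:ℝ)^2*1^2)
      = ∏ i ∈ Finset.Icc 1 k, (((k:ℝ)+1)^2 - (i:ℝ)^2) := by
    apply Finset.prod_congr rfl
    intro i _
    rw [hc]; ring
  have hcpos : (0:ℝ) < c := by rw [hc]; positivity
  rw [hE, hprod, hne.neg_pow]
  have h1 : (0:ℝ) < (-c - c) * (-c) := by nlinarith
  have h2 : (0:ℝ) < c^(2*n) + 1^(2*n) := by positivity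
  have h3 := prodpos k
  have h4 : (0:ℝ) < (((1:ℕ) + ((1:ℕ) + (2*n + k*2)) : ℕ) : ℝ) := by positivity
  calc (0:ℝ) < ((-c - c) * (-c)) * ((c^(2*n) + 1^(2*n))
        * (∏ i ∈ Finset.Icc 1 k, (((k:ℝ)+1)^2 - (i:ℝ)^2))
        * (((1:ℕ) + ((1:ℕ) + (2*n + k*2)) : ℕ) : ℝ)) :=
      mul_pos h1 (mul_pos (mul_pos h2 h3) h4)
    _ = _ := by ring

theorem no_factor_L (n k : ℕ) (hn : 1 ≤ n) (hk : 1 ≤ k) :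
    0 < eval ![-((k : ℝ) + 1), 1]
        (pderiv 1 ((X 0 - C ((k : ℝ) + 1) * X 1) * (X 0 * (X 0 ^ (2 * n) + X 1 ^ (2 * n))
            * ∏ i ∈ Finset.Icc 1 k, (X 0 ^ 2 - C ((i : ℝ) ^ 2) * X 1 ^ 2)))
          - C ((k : ℝ) + 1) * pderiv 0 ((X 0 - C ((k : ℝ) + 1) * X 1)
            * (X 0 * (X 0 ^ (2 * n) + X 1 ^ (2 * n))
            * ∏ i ∈ Finset.Icc 1 k, (X 0 ^ 2 - C ((i : ℝ) ^ 2) * X 1 ^ 2)))) ∧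
    ¬ (X 0 + C ((k : ℝ) + 1) * X 1) ∣
        (pderiv 1 ((X 0 - C ((k : ℝ) + 1) * X 1) * (X 0 * (X 0 ^ (2 * n) + X 1 ^ (2 * n))
            * ∏ i ∈ Finset.Icc 1 k, (X 0 ^ 2 - C ((i : ℝ) ^ 2) * X 1 ^ 2)))
          - C ((k : ℝ) + 1) * pderiv 0 ((X 0 - C ((k : ℝ) + 1) * X 1)
            * (X 0 * (X 0 ^ (2 * n) + X 1 ^ (2 * n))
            * ∏ i ∈ Finset.Icc 1 k, (X 0 ^ 2 - C ((i : ℝ) ^ 2) * X 1 ^ 2)))) := by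
  constructor
  · have h := eval_pos (σ := Fin 2) n k ![-((k:ℝ)+1), 1] 0 1 (by decide)
      (by simp) (by simp) (by intro j hj0 hj1; fin_cases j <;> simp_all)
    exact h
  · rintro ⟨q, hq⟩
    set w : ℕ → ℝ := fun j => if j = 0 then -((k:ℝ)+1) else 1 with hw
    have hpos := eval_pos (σ := ℕ) n k w 0 1 (by decide)
      (by simp [hw]) (by simp [hw]) (by intro j hj0 _; simp [hw, hj0])
    rw [hq] at hpos
    have h0 : eval w ((X 0 + C ((k:ℝ)+1) * X 1) * q) = 0 := by
      rw [eval_mul]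
      have : eval w (X 0 + C ((k:ℝ)+1) * X 1) = 0 := by simp [hw]
      rw [this, zero_mul]
    rw [h0] at hpos
    exact lt_irrefl 0 hpos
end

section
/- Let f be a hyperbolic homogeneous polynomial of degree D and F(φ) = f(cos φ, sin φ). Then every critical point of F is nondegenerate (F'(φ₀) = 0 implies F''(φ₀) ≠ 0), and F has no zeros of multiplicity ≥ 2. -/
open MvPolynomial Real

lemma euler {D : ℕ} (f : MvPolynomial (Fin 2) ℝ) (hf : f.IsHomogeneous D) :
    X 0 * pderiv 0 f + X 1 * pderiv 1 f = C (D : ℝ) * f := by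
  conv_lhs => rw [f.as_sum]
  conv_rhs => rw [f.as_sum]
  rw [map_sum, map_sum, Finset.mul_sum, Finset.mul_sum, Finset.mul_sum,
    ← Finset.sum_add_distrib]
  refine Finset.sum_congr rfl fun d hd => ?_
  have hdeg : d 0 + d 1 = D := by
    have h1 : Finsupp.degree d = D := by
      rw [Finsupp.degree_eq_weight_one]
      exact hf (mem_support_iff.mp hd)
    have h2 : Finsupp.degree d = d 0 + d 1 := by
      rw [Finsupp.degree, ← Fin.sum_univ_two (fun i => d i)]
      exact Finset.sum_subset (Finset.subset_univ _)
        (fun i _ hi => Finsupp.notMem_support_iff.mp hi)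
    omega
  have key : ∀ i : Fin 2, X i * pderiv i (monomial d (coeff d f))
      = monomial d (coeff d f * (d i : ℝ)) := by
    intro i
    rw [pderiv_monomial]
    rcases Nat.eq_zero_or_pos (d i) with h | h
    · simp [h]
    · have hsingle : Finsupp.single i 1 + (d - Finsupp.single i 1) = d := by
        ext k
        rcases eq_or_ne i k with rfl | hik
        · rw [Finsupp.add_apply, Finsupp.tsub_apply, Finsupp.single_eq_same]
          exact Nat.add_sub_cancel' h
        · rw [Finsupp.add_apply, Finsupp.tsub_apply, Finsupp.single_eq_of_ne' hik]
          omega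
      rw [X, monomial_mul, one_mul, hsingle]
  rw [key 0, key 1, C_mul_monomial, ← map_add]
  congr 1
  have : ((d 0 : ℝ) + (d 1 : ℝ)) = (D : ℝ) := by exact_mod_cast congrArg (Nat.cast (R := ℝ)) hdeg
  linear_combination (coeff d f) * this

lemma hasDerivAt_eval_circle (f : MvPolynomial (Fin 2) ℝ) (t : ℝ) :
    HasDerivAt (fun t => eval ![Real.cos t, Real.sin t] f)
      (-Real.sin t * eval ![Real.cos t, Real.sin t] (pderiv 0 f)
        + Real.cos t * eval ![Real.cos t, Real.sin t] (pderiv 1 f)) t := by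
  induction f using MvPolynomial.induction_on with
  | C a =>
    simp only [eval_C, pderiv_C, map_zero, mul_zero, add_zero]
    exact hasDerivAt_const t a
  | add p q hp hq =>
    have := hp.add hq
    simp only [map_add]
    exact this.congr_deriv (by ring)
  | mul_X p i hp =>
    fin_cases i
    · convert hp.mul (Real.hasDerivAt_cos t) using 1
      · rfl
      · rfl
      · funext s
        simp [eval_mul]
      · simp [pderiv_mul, pderiv_X_self, pderiv_X_of_ne (show (0 : Fin 2) ≠ 1 by decide),
          pderiv_X_of_ne (show (1 : Fin 2) ≠ 0 by decide)]
        ring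
    · convert hp.mul (Real.hasDerivAt_sin t) using 1
      · rfl
      · rfl
      · funext s
        simp [eval_mul]
      · simp [pderiv_mul, pderiv_X_self, pderiv_X_of_ne (show (0 : Fin 2) ≠ 1 by decide),
          pderiv_X_of_ne (show (1 : Fin 2) ≠ 0 by decide)]
        ring

theorem nondegenerate_critical_points (D : ℕ) (f : MvPolynomial (Fin 2) ℝ)
    (hf : f.IsHomogeneous D) (hyp : Hyperbolic f) :
    (∀ φ : ℝ, deriv (fun t => eval ![Real.cos t, Real.sin t] f) φ = 0 →
      deriv (deriv (fun t => eval ![Real.cos t, Real.sin t] f)) φ ≠ 0) ∧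
    (∀ φ : ℝ, eval ![Real.cos φ, Real.sin φ] f = 0 →
      deriv (fun t => eval ![Real.cos t, Real.sin t] f) φ ≠ 0) := by
  have h01 : (0 : Fin 2) ≠ 1 := by decide
  have h10 : (1 : Fin 2) ≠ 0 := by decide
  have hneg : ∀ φ : ℝ, eval ![Real.cos φ, Real.sin φ] (Hess f) < 0 := by
    intro φ
    refine hyp _ _ ?_
    rintro ⟨hc, hs⟩
    have := Real.sin_sq_add_cos_sq φ
    rw [hc, hs] at this
    norm_num at this
  have hD : (0 : ℝ) ≤ ((D : ℝ) - 1) * (D : ℝ) ^ 2 := by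
    rcases D with _ | n
    · norm_num
    · have hn : (0 : ℝ) ≤ (n : ℝ) := Nat.cast_nonneg n
      push_cast
      nlinarith
  have KEY : ∀ φ : ℝ, eval ![Real.cos φ, Real.sin φ] (Hess f) =
      ((D : ℝ) - 1) * ((D : ℝ) ^ 2 * (eval ![Real.cos φ, Real.sin φ] f) ^ 2
        + (D : ℝ) * (eval ![Real.cos φ, Real.sin φ] f)
            * deriv (deriv (fun t => eval ![Real.cos t, Real.sin t] f)) φ
        - ((D : ℝ) - 1) * (deriv (fun t => eval ![Real.cos t, Real.sin t] f) φ) ^ 2) := by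
    intro φ
    have hg' : (deriv fun t => eval ![Real.cos t, Real.sin t] f) = fun t =>
        -Real.sin t * eval ![Real.cos t, Real.sin t] (pderiv 0 f)
          + Real.cos t * eval ![Real.cos t, Real.sin t] (pderiv 1 f) :=
      funext fun s => (hasDerivAt_eval_circle f s).deriv
    have hF'' : deriv (deriv fun t => eval ![Real.cos t, Real.sin t] f) φ =
        -Real.cos φ * eval ![Real.cos φ, Real.sin φ] (pderiv 0 f)
          + -Real.sin φ * (-Real.sin φ * eval ![Real.cos φ, Real.sin φ] (pderiv 0 (pderiv 0 f))
              + Real.cos φ * eval ![Real.cos φ, Real.sin φ] (pderiv 1 (pderiv 0 f)))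
          + (-Real.sin φ * eval ![Real.cos φ, Real.sin φ] (pderiv 1 f)
            + Real.cos φ * (-Real.sin φ * eval ![Real.cos φ, Real.sin φ] (pderiv 0 (pderiv 1 f))
              + Real.cos φ * eval ![Real.cos φ, Real.sin φ] (pderiv 1 (pderiv 1 f)))) := by
      rw [hg']
      exact (((Real.hasDerivAt_sin φ).neg.mul (hasDerivAt_eval_circle (pderiv 0 f) φ)).add
        ((Real.hasDerivAt_cos φ).mul (hasDerivAt_eval_circle (pderiv 1 f) φ))).deriv
    rw [pderiv_pderiv_comm 0 1 f] at hF''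
    have e1 := congrArg (eval ![Real.cos φ, Real.sin φ]) (euler f hf)
    have e2 := congrArg (eval ![Real.cos φ, Real.sin φ]) (congrArg (pderiv (0 : Fin 2)) (euler f hf))
    have e3 := congrArg (eval ![Real.cos φ, Real.sin φ]) (congrArg (pderiv (1 : Fin 2)) (euler f hf))
    simp only [map_add, pderiv_mul, pderiv_C, pderiv_X_self, pderiv_X_of_ne h01, pderiv_X_of_ne h10,
      pderiv_C_mul, one_mul, zero_mul, zero_add, add_zero, eval_add, eval_mul, eval_C, eval_X,
      Matrix.cons_val_zero, Matrix.cons_val_one, Matrix.head_cons] at e1 e2 e3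
    rw [pderiv_pderiv_comm 0 1 f] at e2
    have hs : Real.cos φ ^ 2 + Real.sin φ ^ 2 = 1 := by
      have := Real.sin_sq_add_cos_sq φ
      linarith
    rw [hF'', (hasDerivAt_eval_circle f φ).deriv]
    simp only [Hess, eval_sub, eval_mul, eval_pow]
    set x := Real.cos φ
    set y := Real.sin φ
    set F := eval ![x, y] f
    set p := eval ![x, y] (pderiv 0 f)
    set q := eval ![x, y] (pderiv 1 f)
    set a := eval ![x, y] (pderiv 0 (pderiv 0 f))
    set b := eval ![x, y] (pderiv 1 (pderiv 0 f))
    set c := eval ![x, y] (pderiv 1 (pderiv 1 f))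
    linear_combination
      ((y ^ 2 * a - 2 * x * y * b + x ^ 2 * c) * x
          + y * ((x ^ 2 * b + x * y * c - x * y * a - y ^ 2 * b)
            + ((D : ℝ) - 1) * (x * q - y * p))) * e2
        + ((y ^ 2 * a - 2 * x * y * b + x ^ 2 * c) * y
          - x * ((x ^ 2 * b + x * y * c - x * y * a - y ^ 2 * b)
            + ((D : ℝ) - 1) * (x * q - y * p))) * e3
        + (((D : ℝ) - 1) * (y ^ 2 * a - 2 * x * y * b + x ^ 2 * c)
            + ((D : ℝ) - 1) * (D : ℝ) * F) * e1
        - (a * c - b ^ 2) * (x ^ 2 + y ^ 2 + 1) * hs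
  constructor
  · intro φ h1 h2
    have k := KEY φ
    rw [h1, h2] at k
    nlinarith [hneg φ, sq_nonneg (eval ![Real.cos φ, Real.sin φ] f), hD, k]
  · intro φ hF h1
    have k := KEY φ
    rw [h1, hF] at k
    norm_num at k
    linarith [hneg φ, k.le, k.ge]
end
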